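/- arXiv:math-ph/0312030 — 5 statements merged into one kernel-verified Lean document; each statement's English description precedes it below -/
import Mathlib

section
/- Let g = ⊕_j g_j be a good Z-grading of a semisimple Lie algebra with good element e ∈ g_2. Write the characteristic Π = ∪_{s≥0} Π_s, where Π is a set of simple roots adapted to the grading and Π_s consists of simple roots α with g_α ⊆ g_s. Then Π = Π_0 ∪ Π_1 ∪ Π_2, i.e., every simple root has degree 0, 1 or 2. -/
/-- for a good ℤ-grading of a semisimple Lie algebra with good element
`e ∈ g 2`, every simple root has degree `0`, `1` or `2`.  Simple root data is encoded
abstractly: homogeneous simple root vectors `E i ∈ g (d i)` and `Fv i ∈ g (-(d i))`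
with nonnegative degrees `d i`, `⁅E i, Fv j⁆ = 0` for `i ≠ j`, such that the positive
part of the grading is contained in the Lie subalgebra generated by the `E i`.
The conclusion is `d i ≤ 2` for every `i`, i.e. `Π = Π₀ ∪ Π₁ ∪ Π₂`. -/
theorem stmt5 {F L : Type*} [Field F] [CharZero F] [IsAlgClosed F]
    [LieRing L] [LieAlgebra F L] [FiniteDimensional F L]
    [LieAlgebra.IsSemisimple F L]
    (g : ℤ → Submodule F L)
    (hdecomp : DirectSum.IsInternal g)
    (hgrade : ∀ i j : ℤ, ∀ x ∈ g i, ∀ y ∈ g j, ⁅x, y⁆ ∈ g (i + j))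
    (e : L) (he : e ∈ g 2)
    (hinj : ∀ j : ℤ, j ≤ -1 → ∀ x ∈ g j, ⁅e, x⁆ = 0 → x = 0)
    (hsurj : ∀ j : ℤ, -1 ≤ j → ∀ y ∈ g (j + 2), ∃ x ∈ g j, ⁅e, x⁆ = y)
    {ι : Type*} (E Fv : ι → L) (d : ι → ℤ)
    (hE : ∀ i, E i ∈ g (d i)) (hF : ∀ i, Fv i ∈ g (-(d i)))
    (hdpos : ∀ i, 0 ≤ d i)
    (hEne : ∀ i, E i ≠ 0) (hFne : ∀ i, Fv i ≠ 0)
    (hcomm : ∀ i j, i ≠ j → ⁅E i, Fv j⁆ = 0)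
    (hgen : ∀ j : ℤ, 0 < j → g j ≤ (LieSubalgebra.lieSpan F L (Set.range E)).toSubmodule) :
    ∀ i, d i ≤ 2 := by
  intro i
  by_contra hlt
  push_neg at hlt
  have hdi3 : 3 ≤ d i := hlt
  set f := Fv i with hf
  -- sums of homogeneous pieces of degree ≥ a
  set Hs : ℤ → Submodule F L := fun a => ⨆ j : {j : ℤ // a ≤ j}, g j with hHs
  have hg_le : ∀ (a j : ℤ), a ≤ j → g j ≤ Hs a := fun a j h =>
    le_iSup (fun j : {j : ℤ // a ≤ j} => g j) ⟨j, h⟩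
  have Hmono : ∀ a b : ℤ, a ≤ b → Hs b ≤ Hs a := fun a b hab =>
    iSup_le fun j => hg_le a j (hab.trans j.2)
  have br : ∀ a b : ℤ, ∀ x ∈ Hs a, ∀ y ∈ Hs b, ⁅x, y⁆ ∈ Hs (a + b) := by
    intro a b x hx
    refine Submodule.iSup_induction _ (motive := fun x => ∀ y ∈ Hs b, ⁅x, y⁆ ∈ Hs (a + b))
      hx ?_ ?_ ?_
    · rintro ⟨j, hj⟩ x hxj y hy
      refine Submodule.iSup_induction _ (motive := fun y => ⁅x, y⁆ ∈ Hs (a + b)) hy ?_ ?_ ?_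
      · rintro ⟨k, hk⟩ y hyk
        exact hg_le (a + b) (j + k) (add_le_add hj hk) (hgrade j k x hxj y hyk)
      · simp only [lie_zero]; exact zero_mem _
      · intro y z hy hz; rw [lie_add]; exact add_mem hy hz
    · intro y hy; rw [zero_lie]; exact zero_mem _
    · intro x y hx hy z hz; rw [add_lie]; exact add_mem (hx z hz) (hy z hz)
  -- centralizer of f
  set C : Submodule F L :=
    { carrier := {x | ⁅x, f⁆ = 0}
      add_mem' := fun {a b} ha hb => by
        simp only [Set.mem_setOf_eq] at *; rw [add_lie, ha, hb, add_zero]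
      zero_mem' := zero_lie f
      smul_mem' := fun t a ha => by
        simp only [Set.mem_setOf_eq] at *; rw [smul_lie, ha, smul_zero] } with hC
  have memC : ∀ x : L, x ∈ C ↔ ⁅x, f⁆ = 0 := fun x => Iff.rfl
  set W : Submodule F L := (C ⊓ Hs 0) ⊔ Hs (d i) with hW
  have Wlie : ∀ x ∈ W, ∀ y ∈ W, ⁅x, y⁆ ∈ W := by
    intro x hx y hy
    obtain ⟨c1, hc1, h1, hh1, rfl⟩ := Submodule.mem_sup.mp hx
    obtain ⟨c2, hc2, h2, hh2, rfl⟩ := Submodule.mem_sup.mp hy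
    rw [add_lie, lie_add, lie_add]
    have t1 : ⁅c1, c2⁆ ∈ C ⊓ Hs 0 := by
      have hz : ⁅⁅c1, c2⁆, f⁆ = 0 := by
        rw [lie_lie, (memC c2).mp hc2.1, (memC c1).mp hc1.1, lie_zero, lie_zero, sub_zero]
      exact ⟨(memC _).mpr hz, by simpa using br 0 0 c1 hc1.2 c2 hc2.2⟩
    have t2 : ⁅c1, h2⁆ ∈ Hs (d i) := by simpa using br 0 (d i) c1 hc1.2 h2 hh2
    have t3 : ⁅h1, c2⁆ ∈ Hs (d i) := by simpa using br (d i) 0 h1 hh1 c2 hc2.2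
    have t4 : ⁅h1, h2⁆ ∈ Hs (d i) :=
      Hmono (d i) (d i + d i) (le_add_of_nonneg_left (hdpos i)) (br _ _ h1 hh1 h2 hh2)
    exact add_mem (add_mem (Submodule.mem_sup_left t1) (Submodule.mem_sup_right t2))
      (add_mem (Submodule.mem_sup_right t3) (Submodule.mem_sup_right t4))
  set K : LieSubalgebra F L :=
    { toSubmodule := W
      lie_mem' := fun {x y} hx hy => Wlie x hx y hy } with hK
  have hEK : Set.range E ⊆ K := by
    rintro _ ⟨j, rfl⟩
    show E j ∈ W
    by_cases hji : j = i
    · subst hji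
      exact Submodule.mem_sup_right (hg_le (d j) (d j) le_rfl (hE j))
    · exact Submodule.mem_sup_left ⟨(memC (E j)).mpr (hcomm j i hji),
        hg_le 0 (d j) (hdpos j) (hE j)⟩
  have heW : e ∈ W := by
    have h1 : e ∈ LieSubalgebra.lieSpan F L (Set.range E) := hgen 2 (by norm_num) he
    exact (LieSubalgebra.lieSpan_le.mpr hEK) h1
  obtain ⟨c, hc, m, hm, hcm⟩ := Submodule.mem_sup.mp heW
  have hef : ⁅e, f⁆ = ⁅m, f⁆ := by
    rw [← hcm, add_lie, (memC c).mp hc.1, zero_add]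
  have h1 : ⁅e, f⁆ ∈ Hs 0 := by
    rw [hef]
    simpa using br (d i) (-(d i)) m hm f (hg_le (-(d i)) (-(d i)) le_rfl (hF i))
  have h2 : ⁅e, f⁆ ∈ g (2 + -(d i)) := hgrade 2 (-(d i)) e he f (hF i)
  have hindep := hdecomp.submodule_iSupIndep (2 + -(d i))
  have hle : Hs 0 ≤ ⨆ b ≠ (2 + -(d i)), g b := by
    refine iSup_le ?_
    rintro ⟨j, hj⟩
    have hne : j ≠ 2 + -(d i) := by omega
    exact le_iSup_of_le j (le_iSup_of_le hne le_rfl)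
  have hzero : ⁅e, f⁆ = 0 := Submodule.disjoint_def.mp hindep _ h2 (hle h1)
  exact hFne i (hinj (-(d i)) (by omega) f (hF i) hzero)
end

section
/- The generating function F(q) = Σ_n Pyr_n q^n for the total number Pyr_n of pyramids of size n (summed over all partitions of n, counting ∏_{i}(2(p_i - p_{i+1})+1) pyramids per partition p) satisfies F(q) = Σ_{n≥1} ( ∏_{k=1}^{n-1} (1+q^k)/(1-q^k)^2 ) · q^n/(1-q^n). -/
open PowerSeries

/-- The product `∏_i (2(p_i - p_{i+1}) + 1)` over consecutive entries of a
(weakly decreasing) list. -/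
def consProd : List ℕ → ℕ
  | [] => 1
  | [_] => 1
  | a :: b :: l => (2 * (a - b) + 1) * consProd (b :: l)

def diffs : List ℕ → List ℕ
  | [] => []
  | [a] => [a]
  | a :: b :: l => (a - b) :: diffs (b :: l)

@[simp] lemma diffs_length (d : List ℕ) : (diffs d).length = d.length := by
  induction d with
  | nil => rfl
  | cons a t ih =>
    cases t with
    | nil => rfl
    | cons b t' => simp [diffs] at ih ⊢; omega

lemma consProd_eq (d : List ℕ) :
    consProd d = ∏ i ∈ Finset.range (d.length - 1), (2 * (diffs d).getD i 0 + 1) := by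
  induction d with
  | nil => rfl
  | cons a t ih =>
    cases t with
    | nil => rfl
    | cons b t' =>
      rw [consProd, diffs]
      simp only [List.length_cons]
      rw [show t'.length + 1 + 1 - 1 = ((b::t').length - 1) + 1 by simp, Finset.prod_range_succ']
      rw [ih]
      simp [mul_comm]

lemma getD_eq_sum_diffs (d : List ℕ) (hd : d.Pairwise (· ≥ ·)) (j : ℕ) :
    d.getD j 0 = ∑ i ∈ Finset.range (d.length - j), (diffs d).getD (j + i) 0 := by
  induction d generalizing j with
  | nil => simp
  | cons a t ih =>
    cases t with
    | nil =>
      match j with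
      | 0 => simp [diffs]
      | j+1 => simp [diffs]
    | cons b t' =>
      have hba : b ≤ a := by
        have := List.rel_of_pairwise_cons hd (a' := b) (by simp)
        exact this
      have hsort : (b :: t').Pairwise (· ≥ ·) := hd.of_cons
      match j with
      | 0 =>
        rw [List.getD_cons_zero]
        simp only [List.length_cons, Nat.sub_zero]
        rw [Finset.sum_range_succ']
        simp only [Nat.zero_add]
        have : ∀ i, (diffs (a :: b :: t')).getD (i + 1) 0 = (diffs (b :: t')).getD i 0 := by
          intro i; rw [diffs]; simp
        simp only [Nat.zero_add, this]
        have h0 : (diffs (a :: b :: t')).getD 0 0 = a - b := by rw [diffs]; simp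
        rw [h0]
        have h2 := ih hsort 0
        simp only [List.getD_cons_zero, List.length_cons, Nat.sub_zero, Nat.zero_add] at h2
        omega
      | j+1 =>
        rw [List.getD_cons_succ]
        have := ih hsort j
        rw [this]
        have hlen : (b :: t').length - j = (a :: b :: t').length - (j+1) := by simp
        rw [hlen]
        apply Finset.sum_congr rfl
        intro i _
        rw [diffs, show j+1+i = (j+i)+1 from by omega, List.getD_cons_succ]

lemma getD_add_diffs (d : List ℕ) (hd : d.Pairwise (· ≥ ·)) (j : ℕ) :
    d.getD j 0 = (diffs d).getD j 0 + d.getD (j+1) 0 := by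
  rcases lt_or_ge j d.length with h | h
  · rw [getD_eq_sum_diffs d hd j, getD_eq_sum_diffs d hd (j+1),
      show d.length - j = (d.length - (j+1)) + 1 from by omega, Finset.sum_range_succ']
    simp only [Nat.add_zero]
    rw [Nat.add_comm]
    congr 1
    apply Finset.sum_congr rfl
    intro i _
    congr 1
    omega
  · rw [List.getD_eq_default, List.getD_eq_default, List.getD_eq_default] <;>
      first | omega | (rw [diffs_length]; omega)

lemma list_sum_eq (d : List ℕ) : d.sum = ∑ j ∈ Finset.range d.length, d.getD j 0 := by
  induction d with
  | nil => simp
  | cons a t ih =>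
    rw [List.sum_cons, List.length_cons, Finset.sum_range_succ', ih]
    simp [Nat.add_comm]

lemma sum_weighted_diffs (d : List ℕ) (hd : d.Pairwise (· ≥ ·)) :
    ∑ k ∈ Finset.Icc 1 d.length, k * (diffs d).getD (k-1) 0 = d.sum := by
  rw [list_sum_eq]
  have h1 : ∑ k ∈ Finset.Icc 1 d.length, k * (diffs d).getD (k-1) 0
      = ∑ i ∈ Finset.range d.length, (i+1) * (diffs d).getD i 0 := by
    rw [show Finset.Icc 1 d.length = Finset.Ico 1 (d.length + 1) from rfl,
      Finset.sum_Ico_eq_sum_range]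
    simp only [Nat.add_sub_cancel]
    apply Finset.sum_congr rfl
    intro i _
    congr 1
    · omega
    · congr 1; omega
  rw [h1]
  have h2 : ∀ j ∈ Finset.range d.length,
      d.getD j 0 = ∑ i ∈ Finset.Ico j d.length, (diffs d).getD i 0 := by
    intro j _
    rw [getD_eq_sum_diffs d hd j, Finset.sum_Ico_eq_sum_range]
  rw [Finset.sum_congr rfl h2]
  rw [Finset.sum_comm' (t' := Finset.range d.length) (s' := fun i => Finset.range (i+1))
    (by intro x y; simp [Finset.mem_range, Finset.mem_Ico]; omega)]
  apply Finset.sum_congr rfl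
  intro i _
  rw [Finset.sum_const, Finset.card_range, smul_eq_mul]

lemma ccoeff_one_sub_X_pow (k : ℕ) (hk : 0 < k) :
    constantCoeff (R := ℚ) (1 - X ^ k) ≠ 0 := by
  rw [map_sub, map_one, ← coeff_zero_eq_constantCoeff_apply, coeff_X_pow]
  rw [if_neg (by omega : ¬ (0:ℕ) = k)]; norm_num

lemma geom_inv (k : ℕ) (hk : 0 < k) :
    ((1 - X ^ k : PowerSeries ℚ))⁻¹ = mk fun j => if k ∣ j then (1:ℚ) else 0 := by
  rw [PowerSeries.inv_eq_iff_mul_eq_one (ccoeff_one_sub_X_pow k hk)]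
  ext n
  rw [mul_sub, mul_one, map_sub, coeff_mul_X_pow', coeff_mk, coeff_one]
  simp only [coeff_mk]
  rcases Nat.eq_zero_or_pos n with rfl | hn
  · simp only [Nat.dvd_zero, if_true, eq_self_iff_true]
    norm_num [show ¬ k ≤ 0 by omega]
  · rw [if_neg hn.ne']
    by_cases hd : k ∣ n
    · have hkn : k ≤ n := Nat.le_of_dvd hn hd
      have h2 : k ∣ n - k := Nat.dvd_sub hd dvd_rfl
      rw [if_pos hd, if_pos hkn, if_pos h2]; ring
    · rw [if_neg hd]
      by_cases hkn : k ≤ n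
      · have h2 : ¬ k ∣ n - k := fun h => hd (by
          have := Nat.dvd_add h (dvd_refl k); rwa [Nat.sub_add_cancel hkn] at this)
        rw [if_pos hkn, if_neg h2]; ring
      · rw [if_neg hkn]; ring

lemma key_mul (k : ℕ) (hk : 0 < k) :
    (mk fun j => if k ∣ j then ((2*(j/k)+1 : ℕ) : ℚ) else 0) * (1 - X^k)^2
      = 1 + X ^ k := by
  set c : ℕ → ℚ := fun j => if k ∣ j then ((2*(j/k)+1 : ℕ) : ℚ) else 0 with hc
  have expand : mk c * (1-X^k)^2 = mk c - (mk c * X^k + mk c * X^k) + mk c * X^(2*k) := by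
    ring
  rw [expand]
  ext n
  simp only [map_add, map_sub, coeff_mul_X_pow', coeff_mk, coeff_one, coeff_X_pow]
  by_cases hd : k ∣ n
  · obtain ⟨m, rfl⟩ := hd
    have e1 : c (k*m) = ((2*m+1 : ℕ) : ℚ) := by
      simp only [hc, if_pos (Dvd.intro m rfl), Nat.mul_div_cancel_left m hk]
    have e2 : k ≤ k*m ↔ 1 ≤ m := by
      constructor <;> intro h <;> nlinarith [hk]
    have e3 : k*m - k = k*(m-1) := by
      cases m with
      | zero => simp
      | succ m' =>
        simp only [Nat.add_sub_cancel]
        have h : k*(m'+1) = k*m' + k := by ring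
        omega
    have e4 : c (k*(m-1)) = ((2*(m-1)+1 : ℕ) : ℚ) := by
      simp only [hc, if_pos (Dvd.intro (m-1) rfl), Nat.mul_div_cancel_left (m-1) hk]
    have e5 : 2*k ≤ k*m ↔ 2 ≤ m := by
      constructor <;> intro h <;> nlinarith [hk]
    have e6 : k*m - 2*k = k*(m-2) := by
      match m with
      | 0 => simp
      | 1 => simp only [Nat.mul_one]; omega
      | (m'+2) =>
        simp only [Nat.add_sub_cancel]
        have h : k*(m'+2) = k*m' + 2*k := by ring
        omega
    have e7 : c (k*(m-2)) = ((2*(m-2)+1 : ℕ) : ℚ) := by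
      simp only [hc, if_pos (Dvd.intro (m-2) rfl), Nat.mul_div_cancel_left (m-2) hk]
    rw [e1, e3, e4, e6, e7]
    match m with
    | 0 =>
      simp only [Nat.mul_zero]
      rw [if_neg (by omega : ¬ k ≤ 0), if_neg (by omega : ¬ 2*k ≤ 0),
        if_neg (by omega : ¬ (0:ℕ) = k)]
      norm_num
    | 1 =>
      simp only [Nat.mul_one]
      rw [if_pos le_rfl, if_neg (by omega : ¬ 2*k ≤ k), if_neg (by omega : ¬ k = 0)]
      norm_num
    | (m+2) =>
      rw [if_pos (e2.mpr (by omega)), if_pos (e5.mpr (by omega)),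
        if_neg (by intro h; nlinarith : ¬ k*(m+2) = 0),
        if_neg (by intro h; nlinarith : ¬ k*(m+2) = k)]
      push_cast
      ring
  · have hn0 : n ≠ 0 := by rintro rfl; exact hd (dvd_zero k)
    have hnk : n ≠ k := by rintro rfl; exact hd dvd_rfl
    have c0 : c n = 0 := if_neg hd
    have c1 : k ≤ n → c (n - k) = 0 := by
      intro h; apply if_neg; intro h2
      exact hd (by have := Nat.dvd_add h2 (dvd_refl k); rwa [Nat.sub_add_cancel h] at this)
    have c2 : 2*k ≤ n → c (n - 2*k) = 0 := by
      intro h; apply if_neg; intro h2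
      exact hd (by
        have := Nat.dvd_add h2 (Dvd.intro 2 (mul_comm k 2 ▸ rfl) : k ∣ 2*k)
        rwa [Nat.sub_add_cancel h] at this)
    rw [c0, if_neg hn0, if_neg hnk]
    by_cases h1 : k ≤ n <;> by_cases h2 : 2*k ≤ n <;>
      simp [h1, h2, c1, c2]

lemma A_eq (k : ℕ) (hk : 0 < k) :
    (1 + X^k) * (((1 - X^k : PowerSeries ℚ))⁻¹)^2
      = mk fun j => if k ∣ j then ((2*(j/k)+1 : ℕ) : ℚ) else 0 := by
  have h1 := PowerSeries.mul_inv_cancel _ (ccoeff_one_sub_X_pow k hk)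
  calc (1+X^k) * (((1 - X^k : PowerSeries ℚ))⁻¹)^2
      = ((mk fun j => if k ∣ j then ((2*(j/k)+1 : ℕ) : ℚ) else 0) * (1-X^k)^2)
          * ((1-X^k)⁻¹)^2 := by rw [key_mul k hk]
    _ = (mk fun j => if k ∣ j then ((2*(j/k)+1 : ℕ) : ℚ) else 0)
          * ((1-X^k) * (1-X^k)⁻¹)^2 := by ring
    _ = _ := by rw [h1]; ring

lemma B_eq (n : ℕ) (hn : 0 < n) :
    X^n * ((1 - X^n : PowerSeries ℚ))⁻¹
      = mk fun j => if n ∣ j ∧ j ≠ 0 then (1:ℚ) else 0 := by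
  rw [geom_inv n hn]
  ext j
  rw [coeff_X_pow_mul', coeff_mk]
  by_cases h : n ≤ j
  · rw [if_pos h, coeff_mk]
    by_cases hd : n ∣ j
    · rw [if_pos (Nat.dvd_sub hd dvd_rfl), if_pos ⟨hd, by omega⟩]
    · have h2 : ¬ n ∣ j - n := fun h2 => hd (by
        have h3 := Nat.dvd_add h2 (dvd_refl n); rwa [Nat.sub_add_cancel h] at h3)
      rw [if_neg h2, if_neg (by tauto)]
  · rw [if_neg h, coeff_mk,
      if_neg (by rintro ⟨h1, h2⟩; exact h (Nat.le_of_dvd (by omega) h1))]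

lemma coeff_term (N n : ℕ) (hn : 0 < n) :
    coeff (R := ℚ) N ((∏ k ∈ Finset.Icc 1 (n-1),
        (1 + (X : PowerSeries ℚ) ^ k) * ((1 - (X : PowerSeries ℚ) ^ k)⁻¹) ^ 2) *
        (X : PowerSeries ℚ) ^ n * (1 - (X : PowerSeries ℚ) ^ n)⁻¹)
    = ∑ l ∈ Finset.finsuppAntidiag (Finset.Icc 1 n) N,
        (if n ∣ l n ∧ l n ≠ 0 then (1:ℚ) else 0) *
        ∏ k ∈ Finset.Icc 1 (n-1), (if k ∣ l k then ((2*(l k / k)+1 : ℕ):ℚ) else 0) := by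
  set g : ℕ → PowerSeries ℚ := fun k =>
    if k = n then mk (fun j => if n ∣ j ∧ j ≠ 0 then (1:ℚ) else 0)
    else mk (fun j => if k ∣ j then ((2*(j/k)+1 : ℕ) : ℚ) else 0) with hg
  have hins : Finset.Icc 1 n = insert n (Finset.Icc 1 (n-1)) := by
    ext x; simp [Finset.mem_Icc, Finset.mem_insert]; omega
  have hnotmem : n ∉ Finset.Icc 1 (n-1) := by simp [Finset.mem_Icc]; omega
  have hterm : (∏ k ∈ Finset.Icc 1 (n-1),
        (1 + (X : PowerSeries ℚ) ^ k) * ((1 - (X : PowerSeries ℚ) ^ k)⁻¹) ^ 2) *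
        (X : PowerSeries ℚ) ^ n * (1 - (X : PowerSeries ℚ) ^ n)⁻¹
      = ∏ k ∈ Finset.Icc 1 n, g k := by
    rw [hins, Finset.prod_insert hnotmem]
    rw [show g n = mk (fun j => if n ∣ j ∧ j ≠ 0 then (1:ℚ) else 0) from if_pos rfl,
      ← B_eq n hn]
    rw [mul_assoc, mul_comm]
    congr 1
    apply Finset.prod_congr rfl
    intro k hk
    rw [Finset.mem_Icc] at hk
    rw [hg]
    simp only
    rw [if_neg (by omega), ← A_eq k (by omega)]
  rw [hterm, PowerSeries.coeff_prod]
  apply Finset.sum_congr rfl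
  intro l hl
  rw [hins, Finset.prod_insert hnotmem]
  congr 1
  · rw [show g n = mk (fun j => if n ∣ j ∧ j ≠ 0 then (1:ℚ) else 0) from if_pos rfl, coeff_mk]
  · apply Finset.prod_congr rfl
    intro k hk
    rw [Finset.mem_Icc] at hk
    rw [hg]
    simp only
    rw [if_neg (by omega), coeff_mk]

/-- The number `Pyr n` of pyramids of size `n`: the sum over all partitions `p` of `n`
of the number `∏_i (2(p_i - p_{i+1}) + 1)` of pyramids attached to `p` (parts listed
in decreasing order). -/
def PyrCount (n : ℕ) : ℕ :=
  ∑ P : n.Partition, consProd ((P.parts.sort (· ≤ ·)).reverse)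

lemma consProd_pos (d : List ℕ) : 0 < consProd d := by
  induction d with
  | nil => exact Nat.one_pos
  | cons a t ih =>
    cases t with
    | nil => exact Nat.one_pos
    | cons b t' => rw [consProd]; positivity

section DescList
variable {N : ℕ} (P : N.Partition)

def descList : List ℕ := (P.parts.sort (· ≤ ·)).reverse

lemma descList_coe : ((descList P : List ℕ) : Multiset ℕ) = P.parts := by
  rw [descList, Multiset.coe_reverse, Multiset.sort_eq]

lemma descList_sorted : (descList P).Pairwise (· ≥ ·) := by
  unfold descList
  rw [List.pairwise_reverse]
  exact P.parts.pairwise_sort (· ≤ ·)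

lemma descList_length : (descList P).length = P.parts.card := by
  have := congrArg Multiset.card (descList_coe P)
  simpa using this

lemma descList_sum : (descList P).sum = N := by
  have := congrArg Multiset.sum (descList_coe P)
  rw [Multiset.sum_coe] at this
  rw [this, P.parts_sum]

lemma descList_pos : ∀ x ∈ descList P, 0 < x := by
  intro x hx
  apply P.parts_pos
  rw [← descList_coe P]
  exact hx

end DescList

noncomputable def partData {N : ℕ} (P : N.Partition) : Σ _ : ℕ, (ℕ →₀ ℕ) :=
  ⟨P.parts.card, Finsupp.onFinset (Finset.Icc 1 P.parts.card)
    (fun k => if k ∈ Finset.Icc 1 P.parts.card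
      then k * (diffs (descList P)).getD (k-1) 0 else 0)
    (fun a ha => by by_contra hc; exact ha (by simp [hc]))⟩

lemma card_pos_of_one_le {N : ℕ} (hN : 1 ≤ N) (P : N.Partition) : 0 < P.parts.card := by
  rcases Nat.eq_zero_or_pos P.parts.card with h | h
  · exfalso
    have h0 : P.parts = 0 := Multiset.card_eq_zero.mp h
    have := P.parts_sum; rw [h0] at this; simp at this; omega
  · exact h

lemma card_le_of_parts {N : ℕ} (P : N.Partition) : P.parts.card ≤ N := by
  have h := Multiset.card_nsmul_le_sum (s := P.parts)
    (fun x hx => Nat.one_le_iff_ne_zero.mpr (P.parts_pos hx).ne')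
  rw [P.parts_sum, smul_eq_mul, mul_one] at h
  exact h

lemma diffs_last_pos {N : ℕ} (hN : 1 ≤ N) (P : N.Partition) :
    0 < (diffs (descList P)).getD (P.parts.card - 1) 0 := by
  set d := descList P with hd
  have hlen : d.length = P.parts.card := descList_length P
  have hcard : 0 < P.parts.card := card_pos_of_one_le hN P
  have hj : P.parts.card - 1 < d.length := by omega
  have h1 := getD_eq_sum_diffs d (descList_sorted P) (P.parts.card - 1)
  rw [show d.length - (P.parts.card - 1) = 1 from by omega] at h1
  rw [Finset.sum_range_one, Nat.add_zero] at h1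
  rw [← h1, List.getD_eq_getElem d 0 hj]
  exact descList_pos P _ (List.getElem_mem hj)

lemma partData_fst {N : ℕ} (P : N.Partition) : (partData P).1 = P.parts.card := rfl

lemma partData_snd_apply {N : ℕ} (P : N.Partition) (k : ℕ) :
    (partData P).2 k = if k ∈ Finset.Icc 1 P.parts.card
      then k * (diffs (descList P)).getD (k-1) 0 else 0 := rfl

lemma partData_mem_Icc {N : ℕ} (hN : 1 ≤ N) (P : N.Partition) :
    (partData P).1 ∈ Finset.Icc 1 N := by
  rw [partData_fst, Finset.mem_Icc]
  exact ⟨card_pos_of_one_le hN P, card_le_of_parts P⟩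

lemma partData_mem_anti {N : ℕ} (P : N.Partition) :
    (partData P).2 ∈ Finset.finsuppAntidiag (Finset.Icc 1 (partData P).1) N := by
  rw [Finset.mem_finsuppAntidiag]
  constructor
  · rw [partData_fst]
    have h1 : ∀ k ∈ Finset.Icc 1 P.parts.card,
        (partData P).2 k = k * (diffs (descList P)).getD (k-1) 0 := by
      intro k hk
      rw [partData_snd_apply, if_pos hk]
    rw [Finset.sum_congr rfl h1, ← descList_length P,
      sum_weighted_diffs _ (descList_sorted P), descList_sum]
  · exact Finsupp.support_onFinset_subset
      (hf := fun a ha => by by_contra hc; exact ha (by simp [hc]))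

lemma partData_weight {N : ℕ} (hN : 1 ≤ N) (P : N.Partition) :
    ((consProd (descList P) : ℕ) : ℚ)
      = (if (partData P).1 ∣ (partData P).2 (partData P).1 ∧
            (partData P).2 (partData P).1 ≠ 0 then (1:ℚ) else 0)
        * ∏ k ∈ Finset.Icc 1 ((partData P).1 - 1),
            (if k ∣ (partData P).2 k then ((2*((partData P).2 k / k)+1 : ℕ):ℚ) else 0) := by
  set n := P.parts.card with hn
  have hn1 : 1 ≤ n := card_pos_of_one_le hN P
  have hlast := diffs_last_pos hN P
  have hvn : (partData P).2 n = n * (diffs (descList P)).getD (n-1) 0 := by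
    rw [partData_snd_apply, if_pos (by rw [Finset.mem_Icc]; omega)]
  have hcond : (partData P).1 ∣ (partData P).2 (partData P).1 ∧
      (partData P).2 (partData P).1 ≠ 0 := by
    rw [partData_fst, ← hn, hvn]
    exact ⟨Dvd.intro _ rfl, by positivity⟩
  rw [if_pos hcond, one_mul]
  have h2 : ∀ k ∈ Finset.Icc 1 ((partData P).1 - 1),
      (if k ∣ (partData P).2 k then ((2*((partData P).2 k / k)+1 : ℕ):ℚ) else 0)
        = ((2 * (diffs (descList P)).getD (k-1) 0 + 1 : ℕ) : ℚ) := by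
    intro k hk
    rw [partData_fst, ← hn, Finset.mem_Icc] at hk
    have hk0 : 0 < k := hk.1
    have hvk : (partData P).2 k = k * (diffs (descList P)).getD (k-1) 0 := by
      rw [partData_snd_apply, if_pos (by rw [Finset.mem_Icc]; omega)]
    rw [hvk, if_pos (Dvd.intro _ rfl), Nat.mul_div_cancel_left _ hk0]
  rw [Finset.prod_congr rfl h2, ← Nat.cast_prod]
  congr 1
  rw [consProd_eq, partData_fst, ← hn, descList_length P, ← hn]
  rw [show Finset.Icc 1 (n-1) = Finset.Ico 1 ((n-1)+1) from by
    ext x; simp [Finset.mem_Icc, Finset.mem_Ico]]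
  rw [Finset.prod_Ico_eq_prod_range]
  simp only [Nat.add_sub_cancel]
  apply Finset.prod_congr rfl
  intro i _
  rw [show 1 + i - 1 = i from by omega]

lemma partData_inj {N : ℕ} (P₁ P₂ : N.Partition) (h : partData P₁ = partData P₂) :
    P₁ = P₂ := by
  have hfst : P₁.parts.card = P₂.parts.card := congrArg Sigma.fst h
  have hsnd : (partData P₁).2 = (partData P₂).2 := by rw [h]
  have hl₁ : (descList P₁).length = P₁.parts.card := descList_length P₁
  have hl₂ : (descList P₂).length = P₁.parts.card := by rw [descList_length P₂, hfst]
  have hdiffs : ∀ i, (diffs (descList P₁)).getD i 0 = (diffs (descList P₂)).getD i 0 := by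
    intro i
    rcases lt_or_ge i P₁.parts.card with hi | hi
    · have hmem₁ : (i+1) ∈ Finset.Icc 1 P₁.parts.card := by rw [Finset.mem_Icc]; omega
      have hmem₂ : (i+1) ∈ Finset.Icc 1 P₂.parts.card := by rw [Finset.mem_Icc]; omega
      have h1 := DFunLike.congr_fun hsnd (i+1)
      rw [partData_snd_apply, partData_snd_apply, if_pos hmem₁, if_pos hmem₂] at h1
      simp only [Nat.add_sub_cancel] at h1
      exact Nat.eq_of_mul_eq_mul_left (by omega) h1
    · rw [List.getD_eq_default, List.getD_eq_default] <;> rw [diffs_length] <;> omega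
  have hgetD : ∀ j, (descList P₁).getD j 0 = (descList P₂).getD j 0 := by
    intro j
    rw [getD_eq_sum_diffs _ (descList_sorted P₁) j,
      getD_eq_sum_diffs _ (descList_sorted P₂) j, hl₁, hl₂]
    exact Finset.sum_congr rfl (fun i _ => hdiffs _)
  have hd : descList P₁ = descList P₂ := by
    apply List.ext_getElem (by omega)
    intro i hi1 hi2
    rw [← List.getD_eq_getElem _ 0 hi1, ← List.getD_eq_getElem _ 0 hi2]
    exact hgetD i
  have hparts : P₁.parts = P₂.parts := by
    rw [← descList_coe P₁, ← descList_coe P₂, hd]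
  exact Nat.Partition.ext hparts

lemma partData_surj {N n : ℕ} (hn1 : 1 ≤ n) (l : ℕ →₀ ℕ)
    (hsum : ∑ k ∈ Finset.Icc 1 n, l k = N)
    (hsupp : l.support ⊆ Finset.Icc 1 n)
    (hdvd : ∀ k, 1 ≤ k → k ≤ n → k ∣ l k)
    (hln : l n ≠ 0) :
    ∃ P : N.Partition, partData P = ⟨n, l⟩ := by
  classical
  set m : ℕ → ℕ := fun k => l k / k with hm
  set v : ℕ → ℕ := fun i => ∑ k ∈ Finset.Icc i n, m k with hv
  set L : List ℕ := (List.range n).map (fun t => v (t+1)) with hL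
  have hlk : ∀ k, 1 ≤ k → k ≤ n → l k = k * m k := by
    intro k h1 h2
    rw [hm]
    exact (Nat.mul_div_cancel' (hdvd k h1 h2)).symm
  have hmn : 1 ≤ m n := by
    rcases hdvd n hn1 le_rfl with ⟨c, hc⟩
    have : m n = c := by rw [hm]; simp only; rw [hc, Nat.mul_div_cancel_left _ (by omega)]
    rw [this]
    rcases Nat.eq_zero_or_pos c with rfl | h
    · exfalso; exact hln (by rw [hc]; ring)
    · exact h
  have hv_anti : ∀ i j, i ≤ j → v j ≤ v i := by
    intro i j hij
    apply Finset.sum_le_sum_of_subset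
    apply Finset.Icc_subset_Icc hij le_rfl
  have hv_succ : ∀ k, 1 ≤ k → k ≤ n → v k = m k + v (k+1) := by
    intro k h1 h2
    rw [hv]
    simp only
    rw [show Finset.Icc k n = insert k (Finset.Icc (k+1) n) from by
        ext x; simp [Finset.mem_Icc, Finset.mem_insert]; omega,
      Finset.sum_insert (by simp)]
  have hvn1 : v (n+1) = 0 := by
    rw [hv]; simp only
    rw [Finset.Icc_eq_empty (by omega), Finset.sum_empty]
  have hLlen : L.length = n := by rw [hL]; simp
  have hLget : ∀ t (h : t < n), L.getD t 0 = v (t+1) := by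
    intro t ht
    rw [hL, List.getD_eq_getElem _ 0 (by simpa using ht)]
    simp
  have hLsorted : L.Pairwise (· ≥ ·) := by
    rw [hL]
    exact List.Pairwise.map _ (fun a b (hab : a < b) => hv_anti (a+1) (b+1) (by omega))
      (List.pairwise_lt_range (n := n))
  have hLpos : ∀ x ∈ L, 0 < x := by
    intro x hx
    rw [hL, List.mem_map] at hx
    obtain ⟨t, ht, rfl⟩ := hx
    rw [List.mem_range] at ht
    calc 0 < m n := hmn
      _ ≤ v (t+1) := Finset.single_le_sum (f := m) (fun i _ => Nat.zero_le _)
        (by rw [Finset.mem_Icc]; omega)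
  have hLsum : L.sum = N := by
    have e1 : L.sum = ∑ t ∈ Finset.range n, v (t+1) := by
      rw [hL, ← Multiset.sum_coe, ← Multiset.map_coe]
      rfl
    have e2 : ∑ t ∈ Finset.range n, v (t+1) = ∑ i ∈ Finset.Icc 1 n, v i := by
      rw [show Finset.Icc 1 n = Finset.Ico 1 (n+1) from by
        ext x; simp [Finset.mem_Icc, Finset.mem_Ico],
        Finset.sum_Ico_eq_sum_range]
      simp only [Nat.add_sub_cancel]
      exact Finset.sum_congr rfl (fun i _ => by rw [Nat.add_comm])
    have e3 : ∑ i ∈ Finset.Icc 1 n, v i = ∑ k ∈ Finset.Icc 1 n, k * m k := by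
      rw [hv]
      simp only
      rw [Finset.sum_comm' (t' := Finset.Icc 1 n) (s' := fun k => Finset.Icc 1 k)
        (by intro x y; simp [Finset.mem_Icc]; omega)]
      apply Finset.sum_congr rfl
      intro k _
      rw [Finset.sum_const, Nat.card_Icc, smul_eq_mul, Nat.add_sub_cancel]
    have e4 : ∑ k ∈ Finset.Icc 1 n, k * m k = ∑ k ∈ Finset.Icc 1 n, l k := by
      apply Finset.sum_congr rfl
      intro k hk
      rw [Finset.mem_Icc] at hk
      rw [← hlk k hk.1 hk.2]
    rw [e1, e2, e3, e4, hsum]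
  refine ⟨⟨(L : Multiset ℕ), ?_, ?_⟩, ?_⟩
  · intro i hi
    exact hLpos i (by rwa [← Multiset.mem_coe])
  · rwa [Multiset.sum_coe]
  · set P : N.Partition := ⟨(L : Multiset ℕ), _, _⟩ with hP
    have hcard : P.parts.card = n := by
      show (L : Multiset ℕ).card = n
      rw [Multiset.coe_card, hLlen]
    have hdesc : descList P = L := by
      have hsortL : (P.parts.sort (· ≤ ·)) = L.reverse :=
        List.Perm.eq_of_pairwise'
          (Multiset.pairwise_sort _ _)
          (by rw [List.pairwise_reverse]; exact hLsorted)
          (by rw [← Multiset.coe_eq_coe, Multiset.sort_eq, Multiset.coe_reverse])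
      rw [descList, hsortL, List.reverse_reverse]
    have hdiffsL : ∀ k, 1 ≤ k → k ≤ n → (diffs L).getD (k-1) 0 = m k := by
      intro k h1 h2
      have e1 := getD_add_diffs L hLsorted (k-1)
      rw [hLget (k-1) (by omega), show k - 1 + 1 = k from by omega] at e1
      have e2 : L.getD k 0 = v (k+1) := by
        rcases lt_or_ge k n with hk | hk
        · exact hLget k hk
        · rw [List.getD_eq_default _ _ (by omega), show k = n from by omega, hvn1]
      rw [e2] at e1
      have e3 := hv_succ k h1 h2
      omega
    apply Sigma.ext
    · show P.parts.card = n
      exact hcard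
    · show HEq (partData P).2 l
      apply heq_of_eq
      apply Finsupp.ext
      intro k
      rw [partData_snd_apply, hcard, hdesc]
      by_cases hk : k ∈ Finset.Icc 1 n
      · rw [if_pos hk]
        rw [Finset.mem_Icc] at hk
        rw [hdiffsL k hk.1 hk.2, ← hlk k hk.1 hk.2]
      · rw [if_neg hk]
        symm
        rw [← Finsupp.notMem_support_iff]
        exact fun hc => hk (hsupp hc)

/-- the generating function `F(q) = Σ_n Pyr_n q^n` equals
`Σ_{n≥1} (∏_{k=1}^{n-1} (1+q^k)/(1-q^k)²) · qⁿ/(1-qⁿ)`, stated coefficient-wise: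
for every `N ≥ 1`, `Pyr_N` is the `N`-th coefficient of the partial sum up to `n = N`
(the omitted terms have order `> N`). -/
theorem stmt12 (N : ℕ) (hN : 1 ≤ N) :
    (PyrCount N : ℚ) =
      PowerSeries.coeff (R := ℚ) N (∑ n ∈ Finset.Icc 1 N,
        (∏ k ∈ Finset.Icc 1 (n - 1),
            (1 + (X : PowerSeries ℚ) ^ k) * ((1 - (X : PowerSeries ℚ) ^ k)⁻¹) ^ 2) *
          (X : PowerSeries ℚ) ^ n * (1 - (X : PowerSeries ℚ) ^ n)⁻¹) := by
  rw [map_sum]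
  rw [Finset.sum_congr rfl
    (fun n hn => coeff_term N n (by rw [Finset.mem_Icc] at hn; omega))]
  rw [Finset.sum_sigma' (Finset.Icc 1 N) (fun n => (Finset.Icc 1 n).finsuppAntidiag N)
    (fun n l => (if n ∣ l n ∧ l n ≠ 0 then (1:ℚ) else 0) *
      ∏ k ∈ Finset.Icc 1 (n - 1), (if k ∣ l k then ((2*(l k / k)+1 : ℕ):ℚ) else 0))]
  rw [PyrCount, Nat.cast_sum]
  refine Finset.sum_bij_ne_zero (fun P _ _ => partData P) ?_ ?_ ?_ ?_
  · intro P _ _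
    rw [Finset.mem_sigma]
    exact ⟨partData_mem_Icc hN P, partData_mem_anti P⟩
  · intro P₁ _ _ P₂ _ _ h
    exact partData_inj P₁ P₂ h
  · rintro ⟨n, l⟩ hb hg
    rw [Finset.mem_sigma, Finset.mem_Icc, Finset.mem_finsuppAntidiag] at hb
    obtain ⟨⟨hn1, hnN⟩, hsum, hsupp⟩ := hb
    simp only at hg
    have h1 : n ∣ l n ∧ l n ≠ 0 := by
      by_contra hc
      exact hg (by rw [if_neg hc, zero_mul])
    have h2 : ∀ k ∈ Finset.Icc 1 (n-1),
        (if k ∣ l k then ((2*(l k / k)+1 : ℕ):ℚ) else 0) ≠ 0 := by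
      apply Finset.prod_ne_zero_iff.mp
      exact fun hc => hg (by rw [hc, mul_zero])
    have hdvd : ∀ k, 1 ≤ k → k ≤ n → k ∣ l k := by
      intro k hk1 hk2
      rcases eq_or_lt_of_le hk2 with rfl | hlt
      · exact h1.1
      · have := h2 k (by rw [Finset.mem_Icc]; omega)
        by_contra hc
        exact this (if_neg hc)
    obtain ⟨P, hP⟩ := partData_surj hn1 l hsum hsupp hdvd h1.2
    exact ⟨P, Finset.mem_univ P, Nat.cast_ne_zero.mpr (consProd_pos _).ne', hP⟩
  · intro P _ _
    exact partData_weight hN P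
end

section
/- As formal power series, Σ_{n≥1} ( ∏_{k=1}^{n-1} (1+q^k)/(1-q^k)^2 ) · q^n/(1-q^n) = Σ_{n≥1} ( q^{(3n²-n)/2} - q^{(3n²+n)/2} ) · ∏_{k≥1} (1+q^k)/(1-q^k)^2. -/
open PowerSeries Finset

namespace St13
noncomputable section

abbrev R := PowerSeries ℚ

def u (k : ℕ) : R := 1 + (X : R) ^ k
def v (k : ℕ) : R := 1 - (X : R) ^ k
def ui (k : ℕ) : R := (1 + (X : R) ^ k)⁻¹
def vi (k : ℕ) : R := ((1 - (X : R) ^ k)⁻¹ : R)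

lemma constC_u (k : ℕ) (hk : 1 ≤ k) : constantCoeff (R := ℚ) (u k) ≠ 0 := by
  have : constantCoeff (R := ℚ) ((X : R) ^ k) = 0 := by
    rw [← coeff_zero_eq_constantCoeff, coeff_X_pow]
    simp [Nat.ne_of_lt hk]
  simp [u, this]

lemma constC_v (k : ℕ) (hk : 1 ≤ k) : constantCoeff (R := ℚ) (v k) ≠ 0 := by
  have : constantCoeff (R := ℚ) ((X : R) ^ k) = 0 := by
    rw [← coeff_zero_eq_constantCoeff, coeff_X_pow]
    simp [Nat.ne_of_lt hk]
  simp [v, this]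

lemma u_mul_ui (k : ℕ) (hk : 1 ≤ k) : u k * ui k = 1 :=
  PowerSeries.mul_inv_cancel _ (constC_u k hk)

lemma v_mul_vi (k : ℕ) (hk : 1 ≤ k) : v k * vi k = 1 :=
  PowerSeries.mul_inv_cancel _ (constC_v k hk)

/-- congruence mod X^(N+1) -/
def MD (N : ℕ) (f g : R) : Prop := ((X : R) ^ (N + 1)) ∣ (f - g)

lemma MD.refl {N : ℕ} (f : R) : MD N f f := by simp [MD]

lemma MD.symm {N : ℕ} {f g : R} (h : MD N f g) : MD N g f := by
  simpa [MD, neg_sub] using (dvd_neg.mpr h)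

lemma MD.trans {N : ℕ} {f g h : R} (h1 : MD N f g) (h2 : MD N g h) : MD N f h := by
  have := dvd_add h1 h2
  simpa [MD, sub_add_sub_cancel] using this

lemma MD.add {N : ℕ} {a b c d : R} (h1 : MD N a b) (h2 : MD N c d) : MD N (a + c) (b + d) := by
  have := dvd_add h1 h2
  simpa [MD, add_sub_add_comm] using this

lemma MD.sub {N : ℕ} {a b c d : R} (h1 : MD N a b) (h2 : MD N c d) : MD N (a - c) (b - d) := by
  have := dvd_sub h1 h2
  simpa [MD, sub_sub_sub_comm] using this

lemma MD.mul {N : ℕ} {a b c d : R} (h1 : MD N a b) (h2 : MD N c d) : MD N (a * c) (b * d) := by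
  have : a * c - b * d = (a - b) * c + b * (c - d) := by ring
  rw [MD, this]
  exact dvd_add (Dvd.dvd.mul_right h1 c) (Dvd.dvd.mul_left h2 b)

lemma MD.mul_left {N : ℕ} (a : R) {c d : R} (h2 : MD N c d) : MD N (a * c) (a * d) :=
  (MD.refl a).mul h2

lemma MD.mul_right {N : ℕ} {c d : R} (a : R) (h2 : MD N c d) : MD N (c * a) (d * a) :=
  h2.mul (MD.refl a)

lemma MD.neg {N : ℕ} {a b : R} (h : MD N a b) : MD N (-a) (-b) := by
  have : -a - -b = -(a - b) := by ring
  rw [MD, this]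
  exact dvd_neg.mpr h

lemma MD.sum {N : ℕ} {s : Finset ℕ} {f g : ℕ → R} (h : ∀ i ∈ s, MD N (f i) (g i)) :
    MD N (∑ i ∈ s, f i) (∑ i ∈ s, g i) := by
  rw [MD, ← Finset.sum_sub_distrib]
  exact Finset.dvd_sum h

lemma MD.cancel_unit {N : ℕ} {w wi : R} (hw : w * wi = 1) {c d : R}
    (h : MD N (w * c) (w * d)) : MD N c d := by
  have := MD.mul_left (N := N) wi h
  have e : ∀ x : R, wi * (w * x) = x := by
    intro x; rw [← mul_assoc, mul_comm wi w, hw, one_mul]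
  rwa [e, e] at this

lemma MD_zero_of_dvd {N : ℕ} {f : R} (h : ((X : R) ^ (N + 1)) ∣ f) : MD N f 0 := by
  simpa [MD] using h

lemma MD_pow_zero {N j : ℕ} (hj : N + 1 ≤ j) (f : R) : MD N ((X : R) ^ j * f) 0 := by
  apply MD_zero_of_dvd
  exact Dvd.dvd.mul_right (pow_dvd_pow _ hj) f

lemma coeff_eq_of_MD {N : ℕ} {f g : R} (h : MD N f g) : coeff (R := ℚ) N f = coeff (R := ℚ) N g := by
  obtain ⟨c, hc⟩ := h
  have : f = g + (X : R) ^ (N + 1) * c := by rw [← hc]; ring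
  rw [this, map_add]
  have : coeff (R := ℚ) N ((X : R) ^ (N + 1) * c) = 0 := by
    rw [coeff_mul]
    apply Finset.sum_eq_zero
    intro p hp
    rw [coeff_X_pow]
    have : p.1 ≤ N := by
      have := Finset.HasAntidiagonal.mem_antidiagonal.mp hp
      omega
    simp [Nat.ne_of_lt (by omega : p.1 < N + 1)]
  simp [this]


/-! ### Definitions of the truncated sums and products -/

/-- `Pic c n = ∏_{j=1}^{n} (1+X^{j+c})` -/
def Pic (c n : ℕ) : R := ∏ j ∈ range n, u (j + 1 + c)
/-- `Den n = ∏_{k=1}^{n} (1-X^k)⁻¹` -/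
def Den (n : ℕ) : R := ∏ k ∈ range n, vi (k + 1)
/-- partial theta type sum -/
def W (N a c : ℕ) : R := ∑ n ∈ range (N + 2), (-1 : R) ^ n * (X : R) ^ (a * n) * Pic c n
/-- Euler sum -/
def G (N j : ℕ) : R := ∑ m ∈ range (N + 2), (X : R) ^ (j * m) * Den m
/-- q-binomial sum at `t = -X^j` -/
def F (N j : ℕ) : R := ∑ k ∈ range (N + 2), (-1 : R) ^ k * (X : R) ^ (j * k) * Pic 0 k * Den k
def Aa (N j : ℕ) : R := ∏ k ∈ range (N + 1 - j), vi (j + k)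
def Bb (N j : ℕ) : R := ∏ k ∈ range (N + 1 - j), v (j + k)
def Cc (N j : ℕ) : R := ∏ k ∈ range (N + 1 - j), u (j + k)
def Cci (N j : ℕ) : R := ∏ k ∈ range (N + 1 - j), ui (j + k)

/-! ### product manipulation lemmas -/

lemma Pic_succ_top (c n : ℕ) : Pic c (n + 1) = Pic c n * u (n + 1 + c) := by
  simp [Pic, Finset.prod_range_succ]

lemma Pic_succ_bot (c n : ℕ) : Pic c (n + 1) = u (c + 1) * Pic (c + 1) n := by
  simp only [Pic, Finset.prod_range_succ']
  rw [mul_comm]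
  refine congrArg₂ (· * ·) (congrArg u (by omega)) ?_
  exact Finset.prod_congr rfl fun j _ => congrArg u (by omega)

lemma Den_succ (n : ℕ) : Den (n + 1) = Den n * vi (n + 1) := by
  simp [Den, Finset.prod_range_succ]

lemma Aa_split {N j : ℕ} (h : j ≤ N) : Aa N j = vi j * Aa N (j + 1) := by
  have h1 : N + 1 - j = (N - j) + 1 := by omega
  have h2 : N + 1 - (j + 1) = N - j := by omega
  simp only [Aa, h1, h2]
  rw [Finset.prod_range_succ', add_zero, mul_comm]
  congr 1
  exact Finset.prod_congr rfl fun k _ => congrArg vi (by omega)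

lemma Bb_split {N j : ℕ} (h : j ≤ N) : Bb N j = v j * Bb N (j + 1) := by
  have h1 : N + 1 - j = (N - j) + 1 := by omega
  have h2 : N + 1 - (j + 1) = N - j := by omega
  simp only [Bb, h1, h2]
  rw [Finset.prod_range_succ', add_zero, mul_comm]
  congr 1
  exact Finset.prod_congr rfl fun k _ => congrArg v (by omega)

lemma Cci_split {N j : ℕ} (h : j ≤ N) : Cci N j = ui j * Cci N (j + 1) := by
  have h1 : N + 1 - j = (N - j) + 1 := by omega
  have h2 : N + 1 - (j + 1) = N - j := by omega
  simp only [Cci, h1, h2]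
  rw [Finset.prod_range_succ', add_zero, mul_comm]
  congr 1
  exact Finset.prod_congr rfl fun k _ => congrArg ui (by omega)

lemma Aa_top (N : ℕ) : Aa N (N + 1) = 1 := by simp [Aa]
lemma Bb_top (N : ℕ) : Bb N (N + 1) = 1 := by simp [Bb]
lemma Bb_top2 (N : ℕ) : Bb N (N + 2) = 1 := by
  have : N + 1 - (N + 2) = 0 := by omega
  simp [Bb, this]
lemma Cci_top (N : ℕ) : Cci N (N + 1) = 1 := by simp [Cci]

lemma Den_Aa {N n : ℕ} (h : n ≤ N) : Den n * Aa N (n + 1) = Den N := by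
  have hN : N = n + (N - n) := by omega
  have h2 : N + 1 - (n + 1) = N - n := by omega
  conv_rhs => rw [Den, hN, Finset.prod_range_add]
  congr 1
  simp only [Aa, h2]
  exact Finset.prod_congr rfl fun k _ => congrArg vi (by omega)

lemma Pi_Cc {N n : ℕ} (h : n ≤ N) : Pic 0 n * Cc N (n + 1) = Pic 0 N := by
  have hN : N = n + (N - n) := by omega
  have h2 : N + 1 - (n + 1) = N - n := by omega
  conv_rhs => rw [Pic, hN, Finset.prod_range_add]
  congr 1
  simp only [Cc, h2]
  exact Finset.prod_congr rfl fun k _ => congrArg u (by omega)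

lemma Bb_Aa {N j : ℕ} (hj : 1 ≤ j) : Bb N j * Aa N j = 1 := by
  rw [Bb, Aa, ← Finset.prod_mul_distrib]
  apply Finset.prod_eq_one
  intro k _
  exact v_mul_vi _ (by omega)

lemma Cc_Cci {N j : ℕ} (hj : 1 ≤ j) : Cc N j * Cci N j = 1 := by
  rw [Cc, Cci, ← Finset.prod_mul_distrib]
  apply Finset.prod_eq_one
  intro k _
  exact u_mul_ui _ (by omega)


/-! ### more congruence helpers -/

lemma MD_of_sub_eq {N : ℕ} {f g h : R} (e : f - g = h) (hd : ((X : R) ^ (N + 1)) ∣ h) :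
    MD N f g := by rw [MD, e]; exact hd

lemma dvd_term {N j : ℕ} (h : N + 1 ≤ j) (r : R) : ((X : R) ^ (N + 1)) ∣ (X : R) ^ j * r :=
  Dvd.dvd.mul_right (pow_dvd_pow _ h) r

/-! ### Core 2 : the partial-theta lattice -/

lemma c2_R3 (N a c : ℕ) (ha : 1 ≤ a) :
    MD N (W N a c) (1 - (X : R) ^ a * u (c + 1) * W N a (c + 1)) := by
  have e1 : W N a c = 1 + ∑ n ∈ range (N + 1), (-1 : R) ^ (n + 1) * (X : R) ^ (a * (n + 1)) * Pic c (n + 1) := by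
    rw [W, Finset.sum_range_succ']
    have h0 : (-1 : R) ^ 0 * (X : R) ^ (a * 0) * Pic c 0 = 1 := by simp [Pic]
    rw [h0, add_comm]
  have e2 : ∀ n : ℕ, (-1 : R) ^ (n + 1) * (X : R) ^ (a * (n + 1)) * Pic c (n + 1)
      = -((X : R) ^ a * u (c + 1) * ((-1 : R) ^ n * (X : R) ^ (a * n) * Pic (c + 1) n)) := by
    intro n
    rw [Pic_succ_bot, pow_succ, show a * (n + 1) = a + a * n from by ring, pow_add]
    ring
  have e3 : W N a c = 1 - (X : R) ^ a * u (c + 1) *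
      ∑ n ∈ range (N + 1), (-1 : R) ^ n * (X : R) ^ (a * n) * Pic (c + 1) n := by
    rw [e1, Finset.sum_congr rfl (fun n _ => e2 n), Finset.sum_neg_distrib, Finset.mul_sum]
    ring
  have eW : W N a (c + 1) = (∑ n ∈ range (N + 1), (-1 : R) ^ n * (X : R) ^ (a * n) * Pic (c + 1) n)
      + (-1 : R) ^ (N + 1) * (X : R) ^ (a * (N + 1)) * Pic (c + 1) (N + 1) := by
    rw [W, Finset.sum_range_succ]
  apply MD_of_sub_eq (h := (X : R) ^ (a * (N + 1)) *
      ((X : R) ^ a * u (c + 1) * ((-1 : R) ^ (N + 1) * Pic (c + 1) (N + 1))))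
  · linear_combination e3 + (X : R) ^ a * u (c + 1) * eW
  · exact dvd_term (by calc N + 1 = 1 * (N + 1) := by ring
                        _ ≤ a * (N + 1) := Nat.mul_le_mul_right _ ha) _

lemma c2_R1 (N a c : ℕ) (ha : 1 ≤ a) :
    MD N (u a * W N a c) (1 - (X : R) ^ (a + c + 1) * W N (a + 1) c) := by
  have key : ∀ n : ℕ, (-1 : R) ^ (n + 1) * (X : R) ^ (a * (n + 1)) * Pic c (n + 1)
      = -((X : R) ^ a * ((-1 : R) ^ n * (X : R) ^ (a * n) * Pic c n))
        - (X : R) ^ (a + c + 1) * ((-1 : R) ^ n * (X : R) ^ ((a + 1) * n) * Pic c n) := by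
    intro n
    have hu : (X : R) ^ (n + 1 + c) = (X : R) ^ n * (X : R) * (X : R) ^ c := by
      rw [pow_add, pow_add, pow_one]
    have hx1 : (X : R) ^ (a * (n + 1)) = (X : R) ^ (a * n) * (X : R) ^ a := by
      rw [show a * (n + 1) = a * n + a from by ring, pow_add]
    have hx2 : (X : R) ^ ((a + 1) * n) = (X : R) ^ (a * n) * (X : R) ^ n := by
      rw [show (a + 1) * n = a * n + n from by ring, pow_add]
    have hx3 : (X : R) ^ (a + c + 1) = (X : R) ^ a * (X : R) ^ c * (X : R) := by
      rw [pow_add, pow_add, pow_one]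
    rw [Pic_succ_top, u, hu, hx1, hx2, hx3, pow_succ]
    ring
  have e1 : W N a c = 1 + ∑ n ∈ range (N + 1), (-1 : R) ^ (n + 1) * (X : R) ^ (a * (n + 1)) * Pic c (n + 1) := by
    rw [W, Finset.sum_range_succ']
    have h0 : (-1 : R) ^ 0 * (X : R) ^ (a * 0) * Pic c 0 = 1 := by simp [Pic]
    rw [h0, add_comm]
  have e2 : W N a c = 1
      - (X : R) ^ a * ∑ n ∈ range (N + 1), (-1 : R) ^ n * (X : R) ^ (a * n) * Pic c n
      - (X : R) ^ (a + c + 1) * ∑ n ∈ range (N + 1), (-1 : R) ^ n * (X : R) ^ ((a + 1) * n) * Pic c n := by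
    rw [e1, Finset.sum_congr rfl (fun n _ => key n), Finset.sum_sub_distrib,
      Finset.sum_neg_distrib, Finset.mul_sum, Finset.mul_sum]
    ring
  have eWa : W N a c = (∑ n ∈ range (N + 1), (-1 : R) ^ n * (X : R) ^ (a * n) * Pic c n)
      + (-1 : R) ^ (N + 1) * (X : R) ^ (a * (N + 1)) * Pic c (N + 1) := by
    rw [W, Finset.sum_range_succ]
  have eWa1 : W N (a + 1) c = (∑ n ∈ range (N + 1), (-1 : R) ^ n * (X : R) ^ ((a + 1) * n) * Pic c n)
      + (-1 : R) ^ (N + 1) * (X : R) ^ ((a + 1) * (N + 1)) * Pic c (N + 1) := by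
    rw [W, Finset.sum_range_succ]
  apply MD_of_sub_eq (h :=
      (X : R) ^ (a * (N + 1) + a) * ((-1 : R) ^ (N + 1) * Pic c (N + 1))
      + (X : R) ^ ((a + 1) * (N + 1) + (a + c + 1)) * ((-1 : R) ^ (N + 1) * Pic c (N + 1)))
  · have lhs : u a * W N a c = W N a c + (X : R) ^ a * W N a c := by rw [u]; ring
    rw [lhs]
    linear_combination e2 + (X : R) ^ a * eWa + (X : R) ^ (a + c + 1) * eWa1
  · apply dvd_add
    · exact dvd_term (by nlinarith [Nat.one_le_iff_ne_zero.mp ha]) _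
    · exact dvd_term (by nlinarith) _


/-! ### pentagonal numbers -/

def pent : ℕ → ℕ
  | 0 => 0
  | m + 1 => pent m + 3 * m + 1

lemma two_pent (m : ℕ) : 2 * pent m = 3 * m ^ 2 - m := by
  induction m with
  | zero => simp [pent]
  | succ n ih =>
    have h1 : 3 * (n + 1) ^ 2 = 3 * n ^ 2 + 6 * n + 3 := by ring
    have h2 : n ≤ 3 * n ^ 2 := by nlinarith
    simp only [pent]
    omega

lemma pent_ge (m : ℕ) : m ≤ pent m := by
  induction m with
  | zero => simp [pent]
  | succ n ih => simp only [pent]; omega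

lemma pent_eq (m : ℕ) : (3 * m ^ 2 - m) / 2 = pent m := by
  have := two_pent m
  omega

lemma pent'_eq (m : ℕ) : (3 * m ^ 2 + m) / 2 = pent m + m := by
  have := two_pent m
  have h2 : m ≤ 3 * m ^ 2 := by nlinarith
  omega

/-! ### Core 2: peeling and chain -/

lemma MD_of_eq {N : ℕ} {f g : R} (e : f = g) : MD N f g := by
  rw [MD, e]; simp

lemma c2_P (N k : ℕ) :
    MD N (W N (k + 1) k)
      (1 - (X : R) ^ (k + 1) + (X : R) ^ (3 * k + 4) * W N (k + 2) (k + 1)) := by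
  have h1 := c2_R3 N (k + 1) k (by omega)
  have h2 := c2_R1 N (k + 1) (k + 1) (by omega)
  refine h1.trans ?_
  have h3 : MD N (1 - (X : R) ^ (k + 1) * u (k + 1) * W N (k + 1) (k + 1))
      (1 - (X : R) ^ (k + 1) * (1 - (X : R) ^ (k + 1 + (k + 1) + 1) * W N (k + 1 + 1) (k + 1))) := by
    refine (MD.refl 1).sub ?_
    have := MD.mul_left (N := N) ((X : R) ^ (k + 1)) h2
    refine (MD_of_eq (by ring)).trans (this.trans (MD.refl _))
  refine h3.trans (MD_of_eq ?_)
  have hW : W N (k + 1 + 1) (k + 1) = W N (k + 2) (k + 1) := by norm_num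
  rw [hW]
  have hx : (X : R) ^ (k + 1) * (X : R) ^ (k + 1 + (k + 1) + 1) = (X : R) ^ (3 * k + 4) := by
    rw [← pow_add]; congr 1; ring
  calc 1 - (X : R) ^ (k + 1) * (1 - (X : R) ^ (k + 1 + (k + 1) + 1) * W N (k + 2) (k + 1))
      = 1 - (X : R) ^ (k + 1) + ((X : R) ^ (k + 1) * (X : R) ^ (k + 1 + (k + 1) + 1)) * W N (k + 2) (k + 1) := by ring
    _ = 1 - (X : R) ^ (k + 1) + (X : R) ^ (3 * k + 4) * W N (k + 2) (k + 1) := by rw [hx]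

lemma c2_chain (N : ℕ) : ∀ K : ℕ, MD N ((X : R) * W N 1 0)
    ((∑ m ∈ range K, ((X : R) ^ (pent (m + 1)) - (X : R) ^ (pent (m + 1) + (m + 1))))
      + (X : R) ^ (pent (K + 1)) * W N (K + 1) K) := by
  intro K
  induction K with
  | zero =>
    apply MD_of_eq
    have : pent 1 = 1 := by simp [pent]
    simp [this]
  | succ K ih =>
    refine ih.trans ?_
    have step : MD N ((X : R) ^ (pent (K + 1)) * W N (K + 1) K)
        (((X : R) ^ (pent (K + 1)) - (X : R) ^ (pent (K + 1) + (K + 1)))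
          + (X : R) ^ (pent (K + 2)) * W N (K + 2) (K + 1)) := by
      have := MD.mul_left (N := N) ((X : R) ^ (pent (K + 1))) (c2_P N K)
      refine this.trans (MD_of_eq ?_)
      have hp2 : pent (K + 2) = pent (K + 1) + (3 * K + 4) := by
        show pent (K + 1) + 3 * (K + 1) + 1 = _
        ring
      rw [hp2, pow_add, pow_add]
      ring
    have := (MD.refl (∑ m ∈ range K, ((X : R) ^ (pent (m + 1)) - (X : R) ^ (pent (m + 1) + (m + 1))))).add step
    refine this.trans (MD_of_eq ?_)
    rw [Finset.sum_range_succ]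
    ring

lemma sum_Icc_conv (f : ℕ → R) (N : ℕ) :
    ∑ n ∈ Finset.Icc 1 N, f n = ∑ m ∈ range N, f (m + 1) := by
  induction N with
  | zero => simp
  | succ n ih => rw [Finset.sum_Icc_succ_top (by omega), ih, Finset.sum_range_succ]

lemma c2_final (N : ℕ) : MD N ((X : R) * W N 1 0)
    (∑ n ∈ Finset.Icc 1 N,
      ((X : R) ^ ((3 * n ^ 2 - n) / 2) - (X : R) ^ ((3 * n ^ 2 + n) / 2))) := by
  refine (c2_chain N N).trans ?_
  have kill : MD N ((X : R) ^ (pent (N + 1)) * W N (N + 1) N) 0 := by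
    apply MD_pow_zero
    exact pent_ge (N + 1)
  have h1 := (MD.refl (∑ m ∈ range N, ((X : R) ^ (pent (m + 1)) - (X : R) ^ (pent (m + 1) + (m + 1))))).add kill
  refine h1.trans (MD_of_eq ?_)
  rw [add_zero]
  rw [sum_Icc_conv]
  apply Finset.sum_congr rfl
  intro m _
  rw [pent_eq, pent'_eq]


/-! ### Core 1 : Euler sum G -/

lemma vDen (m : ℕ) : v (m + 1) * Den (m + 1) = Den m := by
  rw [Den_succ]
  have h := v_mul_vi (m + 1) (by omega)
  calc v (m + 1) * (Den m * vi (m + 1)) = Den m * (v (m + 1) * vi (m + 1)) := by ring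
    _ = Den m := by rw [h, mul_one]

lemma c1_G_rec (N j : ℕ) (hj : 1 ≤ j) : MD N (G N (j + 1)) (v j * G N j) := by
  have e1 : G N j - G N (j + 1) = ∑ m ∈ range (N + 2), ((X : R) ^ (j * m) - (X : R) ^ ((j + 1) * m)) * Den m := by
    rw [G, G, ← Finset.sum_sub_distrib]
    exact Finset.sum_congr rfl fun m _ => by ring
  have e2 : ∀ m : ℕ, ((X : R) ^ (j * (m + 1)) - (X : R) ^ ((j + 1) * (m + 1))) * Den (m + 1)
      = (X : R) ^ j * ((X : R) ^ (j * m) * Den m) := by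
    intro m
    have h1 : (X : R) ^ ((j + 1) * (m + 1)) = (X : R) ^ (j * (m + 1)) * (X : R) ^ (m + 1) := by
      rw [← pow_add]; congr 1; ring
    have h2 : (X : R) ^ (j * (m + 1)) = (X : R) ^ j * (X : R) ^ (j * m) := by
      rw [← pow_add]; congr 1; ring
    calc ((X : R) ^ (j * (m + 1)) - (X : R) ^ ((j + 1) * (m + 1))) * Den (m + 1)
        = (X : R) ^ (j * (m + 1)) * (v (m + 1) * Den (m + 1)) := by rw [v, h1]; ring
      _ = (X : R) ^ j * ((X : R) ^ (j * m) * Den m) := by rw [vDen, h2]; ring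
  have e3 : ∑ m ∈ range (N + 2), ((X : R) ^ (j * m) - (X : R) ^ ((j + 1) * m)) * Den m
      = (X : R) ^ j * ∑ m ∈ range (N + 1), (X : R) ^ (j * m) * Den m := by
    rw [Finset.sum_range_succ']
    have h0 : ((X : R) ^ (j * 0) - (X : R) ^ ((j + 1) * 0)) * Den 0 = 0 := by simp
    rw [h0, add_zero, Finset.sum_congr rfl (fun m _ => e2 m), ← Finset.mul_sum]
  have e4 : G N j = (∑ m ∈ range (N + 1), (X : R) ^ (j * m) * Den m)
      + (X : R) ^ (j * (N + 1)) * Den (N + 1) := by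
    rw [G, Finset.sum_range_succ]
  apply MD_of_sub_eq (h := (X : R) ^ (j * (N + 1) + j) * Den (N + 1))
  · have hv : v j * G N j = G N j - (X : R) ^ j * G N j := by rw [v]; ring
    rw [hv, pow_add]
    linear_combination (-1 : R) * e1 - e3 + (X : R) ^ j * e4
  · exact dvd_term (by nlinarith) _

lemma c1_G_base (N : ℕ) : MD N (G N (N + 1)) 1 := by
  have e : G N (N + 1) - 1 = ∑ m ∈ range (N + 1), (X : R) ^ ((N + 1) * (m + 1)) * Den (m + 1) := by
    rw [G, Finset.sum_range_succ']
    have h0 : (X : R) ^ ((N + 1) * 0) * Den 0 = 1 := by simp [Den]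
    rw [h0]; ring
  rw [MD, e]
  apply Finset.dvd_sum
  intro m _
  have h1 : (X : R) ^ ((N + 1) * (m + 1)) = (X : R) ^ (N + 1) * (X : R) ^ ((N + 1) * m) := by
    rw [← pow_add]; congr 1; ring
  rw [h1, mul_assoc]
  exact Dvd.intro _ rfl

lemma c1_G_pin (N : ℕ) : ∀ d : ℕ, d ≤ N → MD N (G N (N + 1 - d)) (Aa N (N + 1 - d)) := by
  intro d
  induction d with
  | zero =>
    intro _
    simp only [Nat.sub_zero]
    exact (c1_G_base N).trans (MD_of_eq (Aa_top N).symm)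
  | succ d ih =>
    intro hd
    have hj : N + 1 - (d + 1) = N - d := by omega
    have hj2 : N + 1 - d = (N - d) + 1 := by omega
    set j := N - d with hjdef
    have hj1 : 1 ≤ j := by omega
    have hjN : j ≤ N := by omega
    have IH := ih (by omega)
    rw [hj2] at IH
    rw [hj]
    -- IH : MD N (G N (j+1)) (Aa N (j+1))
    have h1 : MD N (v j * G N j) (Aa N (j + 1)) := (c1_G_rec N j hj1).symm.trans IH
    have h2 : MD N (v j * G N j) (v j * (vi j * Aa N (j + 1))) := by
      refine h1.trans (MD_of_eq ?_)
      have hv := v_mul_vi j hj1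
      calc Aa N (j + 1) = (v j * vi j) * Aa N (j + 1) := by rw [hv, one_mul]
        _ = v j * (vi j * Aa N (j + 1)) := by ring
    have h3 := MD.cancel_unit (v_mul_vi j hj1) h2
    exact h3.trans (MD_of_eq (Aa_split hjN).symm)

lemma c1_G_final (N j : ℕ) (h1 : 1 ≤ j) (h2 : j ≤ N + 1) : MD N (G N j) (Aa N j) := by
  have hd : j = N + 1 - (N + 1 - j) := by omega
  rw [hd]
  exact c1_G_pin N (N + 1 - j) (by omega)


/-! ### Core 1 : q-binomial sum F -/

lemma c1_F_rec (N j : ℕ) (hj : 1 ≤ j) :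
    MD N (u j * F N j) (v (j + 1) * F N (j + 1)) := by
  have e1 : F N j - F N (j + 1)
      = ∑ k ∈ range (N + 2), (-1 : R) ^ k * ((X : R) ^ (j * k) - (X : R) ^ ((j + 1) * k)) * Pic 0 k * Den k := by
    rw [F, F, ← Finset.sum_sub_distrib]
    exact Finset.sum_congr rfl fun k _ => by ring
  have e2 : ∀ k : ℕ, (-1 : R) ^ (k + 1) * ((X : R) ^ (j * (k + 1)) - (X : R) ^ ((j + 1) * (k + 1))) * Pic 0 (k + 1) * Den (k + 1)
      = -((X : R) ^ j * ((-1 : R) ^ k * (X : R) ^ (j * k) * Pic 0 k * Den k))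
        - (X : R) ^ (j + 1) * ((-1 : R) ^ k * (X : R) ^ ((j + 1) * k) * Pic 0 k * Den k) := by
    intro k
    have hb : (X : R) ^ ((j + 1) * (k + 1)) = (X : R) ^ (j * (k + 1)) * (X : R) ^ (k + 1) := by
      rw [← pow_add]; congr 1; ring
    have hsplit : (-1 : R) ^ (k + 1) * ((X : R) ^ (j * (k + 1)) - (X : R) ^ ((j + 1) * (k + 1))) * Pic 0 (k + 1) * Den (k + 1)
        = -((-1 : R) ^ k * (X : R) ^ (j * (k + 1)) * Pic 0 (k + 1) * (v (k + 1) * Den (k + 1))) := by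
      rw [hb, v, pow_succ]; ring
    rw [hsplit, vDen, Pic_succ_top, u]
    have h2 : (X : R) ^ (j * (k + 1)) = (X : R) ^ j * (X : R) ^ (j * k) := by
      rw [← pow_add]; congr 1; ring
    have h3 : (X : R) ^ (j * (k + 1)) * (X : R) ^ (k + 1 + 0) = (X : R) ^ (j + 1) * (X : R) ^ ((j + 1) * k) := by
      rw [← pow_add, ← pow_add]; congr 1; ring
    calc -((-1 : R) ^ k * (X : R) ^ (j * (k + 1)) * (Pic 0 k * (1 + (X : R) ^ (k + 1 + 0))) * Den k)
        = -((-1 : R) ^ k * (X : R) ^ (j * (k + 1)) * Pic 0 k * Den k)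
          - ((-1 : R) ^ k * ((X : R) ^ (j * (k + 1)) * (X : R) ^ (k + 1 + 0)) * Pic 0 k * Den k) := by ring
      _ = -((X : R) ^ j * ((-1 : R) ^ k * (X : R) ^ (j * k) * Pic 0 k * Den k))
          - (X : R) ^ (j + 1) * ((-1 : R) ^ k * (X : R) ^ ((j + 1) * k) * Pic 0 k * Den k) := by
          rw [h3, h2]; ring
  have e3 : ∑ k ∈ range (N + 2), (-1 : R) ^ k * ((X : R) ^ (j * k) - (X : R) ^ ((j + 1) * k)) * Pic 0 k * Den k
      = -((X : R) ^ j * ∑ k ∈ range (N + 1), (-1 : R) ^ k * (X : R) ^ (j * k) * Pic 0 k * Den k)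
        - (X : R) ^ (j + 1) * ∑ k ∈ range (N + 1), (-1 : R) ^ k * (X : R) ^ ((j + 1) * k) * Pic 0 k * Den k := by
    rw [Finset.sum_range_succ']
    have h0 : (-1 : R) ^ 0 * ((X : R) ^ (j * 0) - (X : R) ^ ((j + 1) * 0)) * Pic 0 0 * Den 0 = 0 := by simp
    rw [h0, add_zero, Finset.sum_congr rfl (fun k _ => e2 k), Finset.sum_sub_distrib,
      Finset.sum_neg_distrib, Finset.mul_sum, Finset.mul_sum]
  have e4a : F N j = (∑ k ∈ range (N + 1), (-1 : R) ^ k * (X : R) ^ (j * k) * Pic 0 k * Den k)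
      + (-1 : R) ^ (N + 1) * (X : R) ^ (j * (N + 1)) * Pic 0 (N + 1) * Den (N + 1) := by
    rw [F, Finset.sum_range_succ]
  have e4b : F N (j + 1) = (∑ k ∈ range (N + 1), (-1 : R) ^ k * (X : R) ^ ((j + 1) * k) * Pic 0 k * Den k)
      + (-1 : R) ^ (N + 1) * (X : R) ^ ((j + 1) * (N + 1)) * Pic 0 (N + 1) * Den (N + 1) := by
    rw [F, Finset.sum_range_succ]
  apply MD_of_sub_eq (h :=
    (X : R) ^ (j * (N + 1) + j) * ((-1 : R) ^ (N + 1) * Pic 0 (N + 1) * Den (N + 1))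
    + (X : R) ^ ((j + 1) * (N + 1) + (j + 1)) * ((-1 : R) ^ (N + 1) * Pic 0 (N + 1) * Den (N + 1)))
  · have hu : u j * F N j = F N j + (X : R) ^ j * F N j := by rw [u]; ring
    have hv : v (j + 1) * F N (j + 1) = F N (j + 1) - (X : R) ^ (j + 1) * F N (j + 1) := by rw [v]; ring
    rw [hu, hv, pow_add, pow_add]
    linear_combination e1 + e3 + (X : R) ^ j * e4a + (X : R) ^ (j + 1) * e4b
  · apply dvd_add
    · exact dvd_term (by nlinarith) _
    · exact dvd_term (by nlinarith) _

lemma c1_F_base (N : ℕ) : MD N (F N (N + 1)) 1 := by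
  have e : F N (N + 1) - 1 = ∑ k ∈ range (N + 1),
      (-1 : R) ^ (k + 1) * (X : R) ^ ((N + 1) * (k + 1)) * Pic 0 (k + 1) * Den (k + 1) := by
    rw [F, Finset.sum_range_succ']
    have h0 : (-1 : R) ^ 0 * (X : R) ^ ((N + 1) * 0) * Pic 0 0 * Den 0 = 1 := by simp [Pic, Den]
    rw [h0]; ring
  rw [MD, e]
  apply Finset.dvd_sum
  intro k _
  have h1 : (X : R) ^ ((N + 1) * (k + 1)) = (X : R) ^ (N + 1) * (X : R) ^ ((N + 1) * k) := by
    rw [← pow_add]; congr 1; ring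
  have h2 : (-1 : R) ^ (k + 1) * (X : R) ^ ((N + 1) * (k + 1)) * Pic 0 (k + 1) * Den (k + 1)
      = (X : R) ^ (N + 1) * ((-1 : R) ^ (k + 1) * (X : R) ^ ((N + 1) * k) * Pic 0 (k + 1) * Den (k + 1)) := by
    rw [h1]; ring
  rw [h2]
  exact dvd_mul_right _ _

lemma c1_F_step (N j : ℕ) (hj : 1 ≤ j) (hjN : j ≤ N) :
    MD N (v (j + 1) * (Bb N (j + 2) * Cci N (j + 1))) (u j * (Bb N (j + 1) * Cci N j)) := by
  have hrhs : u j * (Bb N (j + 1) * Cci N j) = Bb N (j + 1) * Cci N (j + 1) := by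
    rw [Cci_split hjN]
    calc u j * (Bb N (j + 1) * (ui j * Cci N (j + 1)))
        = (u j * ui j) * (Bb N (j + 1) * Cci N (j + 1)) := by ring
      _ = Bb N (j + 1) * Cci N (j + 1) := by rw [u_mul_ui j hj, one_mul]
  rw [hrhs]
  rcases Nat.lt_or_ge j N with hlt | hge
  · have : Bb N (j + 1) = v (j + 1) * Bb N (j + 2) := Bb_split (by omega)
    rw [this]
    exact MD_of_eq (by ring)
  · have hEq : j = N := by omega
    rw [hEq, Bb_top, Bb_top2, Cci_top]
    apply MD_of_sub_eq (h := -((X : R) ^ (N + 1)))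
    · rw [v]; ring
    · exact ⟨-1, by ring⟩

lemma c1_F_pin (N : ℕ) : ∀ d : ℕ, d ≤ N → MD N (F N (N + 1 - d)) (Bb N ((N + 1 - d) + 1) * Cci N (N + 1 - d)) := by
  intro d
  induction d with
  | zero =>
    intro _
    simp only [Nat.sub_zero]
    refine (c1_F_base N).trans (MD_of_eq ?_)
    rw [Bb_top2, Cci_top, mul_one]
  | succ d ih =>
    intro hd
    have hj : N + 1 - (d + 1) = N - d := by omega
    have hj2 : N + 1 - d = (N - d) + 1 := by omega
    set j := N - d with hjdef
    have hj1 : 1 ≤ j := by omega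
    have hjN : j ≤ N := by omega
    have IH := ih (by omega)
    rw [hj2] at IH
    rw [hj]
    have h1 : MD N (u j * F N j) (v (j + 1) * (Bb N (j + 1 + 1) * Cci N (j + 1))) :=
      (c1_F_rec N j hj1).trans (MD.mul_left _ IH)
    have h2 : MD N (u j * F N j) (u j * (Bb N (j + 1) * Cci N j)) :=
      h1.trans (c1_F_step N j hj1 hjN)
    exact MD.cancel_unit (u_mul_ui j hj1) h2

lemma c1_F_final (N j : ℕ) (h1 : 1 ≤ j) (h2 : j ≤ N + 1) :
    MD N (F N j) (Bb N (j + 1) * Cci N j) := by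
  have hd : j = N + 1 - (N + 1 - j) := by omega
  rw [hd]
  exact c1_F_pin N (N + 1 - j) (by omega)


/-! ### Assembly -/

lemma prod_Icc_conv (f : ℕ → R) (M : ℕ) :
    ∏ k ∈ Finset.Icc 1 M, f k = ∏ k ∈ range M, f (k + 1) := by
  induction M with
  | zero => simp
  | succ n ih => rw [Finset.prod_Icc_succ_top (by omega), ih, Finset.prod_range_succ]

/-- the truncated infinite product in the statement -/
lemma PN_eq (M : ℕ) :
    (∏ k ∈ Finset.Icc 1 M, ((1 + (X : R) ^ k) * ((1 - (X : R) ^ k)⁻¹) ^ 2))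
      = Pic 0 M * (Den M * Den M) := by
  have e1 : ∀ k : ℕ, (1 + (X : R) ^ k) * ((1 - (X : R) ^ k)⁻¹) ^ 2 = u k * (vi k * vi k) := by
    intro k; rw [u, vi]; ring
  rw [Finset.prod_congr rfl (fun k _ => e1 k), Finset.prod_mul_distrib, Finset.prod_mul_distrib]
  rw [prod_Icc_conv u M, prod_Icc_conv vi M]
  have hP : Pic 0 M = ∏ k ∈ range M, u (k + 1) :=
    Finset.prod_congr rfl fun k _ => congrArg u (by omega)
  rw [hP]
  simp [Den]

lemma termL (n : ℕ) (h1 : 1 ≤ n) :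
    (∏ k ∈ Finset.Icc 1 (n - 1), ((1 + (X : R) ^ k) * ((1 - (X : R) ^ k)⁻¹) ^ 2))
        * (X : R) ^ n * (1 - (X : R) ^ n)⁻¹
      = (X : R) ^ n * (Pic 0 (n - 1) * (Den (n - 1) * Den n)) := by
  rw [PN_eq (n - 1)]
  have hvi : (1 - (X : R) ^ n)⁻¹ = vi n := rfl
  have hD : Den n = Den (n - 1) * vi n := by
    have := Den_succ (n - 1)
    rwa [show n - 1 + 1 = n from by omega] at this
  rw [hvi, hD]
  ring

lemma termC (N m : ℕ) (hm : m < N) :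
    MD N ((X : R) ^ (m + 1) * (Pic 0 m * (Den m * Den (m + 1))))
      ((Pic 0 N * Den N) * ((X : R) ^ (m + 1) * Den m * F N (m + 1))) := by
  have hPic : Pic 0 m = Pic 0 N * Cci N (m + 1) := by
    rw [← Pi_Cc (show m ≤ N from by omega), mul_assoc, Cc_Cci (by omega), mul_one]
  have hDen : Den (m + 1) = Den N * Bb N (m + 2) := by
    rw [← Den_Aa (show m + 1 ≤ N from by omega)]
    rw [mul_assoc, mul_comm (Aa N (m + 2)) (Bb N (m + 2)), Bb_Aa (by omega), mul_one]
  have hF : MD N (Bb N (m + 2) * Cci N (m + 1)) (F N (m + 1)) :=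
    (c1_F_final N (m + 1) (by omega) (by omega)).symm
  have h1 := MD.mul_left (N := N)
    ((X : R) ^ (m + 1) * Den m * (Pic 0 N * Den N)) hF
  refine (MD_of_eq ?_).trans (h1.trans (MD_of_eq ?_))
  · rw [hPic, hDen]; ring
  · ring

lemma c1_inner (N k : ℕ) (hk : k < N) :
    MD N (∑ m ∈ range N, (X : R) ^ ((k + 1) * (m + 1)) * Den m)
      ((X : R) ^ (k + 1) * Aa N (k + 1)) := by
  set j := k + 1 with hjdef
  have e1 : ∀ m : ℕ, (X : R) ^ (j * (m + 1)) * Den m = (X : R) ^ j * ((X : R) ^ (j * m) * Den m) := by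
    intro m
    have : (X : R) ^ (j * (m + 1)) = (X : R) ^ j * (X : R) ^ (j * m) := by
      rw [← pow_add]; congr 1; ring
    rw [this, mul_assoc]
  have eG : G N j = (∑ m ∈ range N, (X : R) ^ (j * m) * Den m)
      + (X : R) ^ (j * N) * Den N + (X : R) ^ (j * (N + 1)) * Den (N + 1) := by
    rw [G, Finset.sum_range_succ, Finset.sum_range_succ]
  have step1 : MD N (∑ m ∈ range N, (X : R) ^ (j * (m + 1)) * Den m) ((X : R) ^ j * G N j) := by
    apply MD_of_sub_eq (h := -((X : R) ^ (j * N + j) * Den N) - ((X : R) ^ (j * (N + 1) + j) * Den (N + 1)))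
    · rw [Finset.sum_congr rfl (fun m _ => e1 m), ← Finset.mul_sum, pow_add, pow_add]
      linear_combination (-(X : R) ^ j) * eG
    · apply dvd_sub
      · exact dvd_neg.mpr (dvd_term (by nlinarith) _)
      · exact dvd_term (by nlinarith) _
  refine step1.trans ?_
  exact MD.mul_left _ (c1_G_final N j (by omega) (by omega))

lemma XW_eq (N : ℕ) :
    ∑ k ∈ range (N + 2), (-1 : R) ^ k * (X : R) ^ (k + 1) * Pic 0 k = (X : R) * W N 1 0 := by
  rw [W, Finset.mul_sum]
  apply Finset.sum_congr rfl
  intro k _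
  rw [one_mul, pow_succ]
  ring

theorem main (N : ℕ) (hN : 1 ≤ N) :
    MD N
      (∑ n ∈ Finset.Icc 1 N,
        (∏ k ∈ Finset.Icc 1 (n - 1),
            (1 + (X : PowerSeries ℚ) ^ k) * ((1 - (X : PowerSeries ℚ) ^ k)⁻¹) ^ 2) *
          (X : PowerSeries ℚ) ^ n * (1 - (X : PowerSeries ℚ) ^ n)⁻¹)
      (∑ n ∈ Finset.Icc 1 N,
        ((X : PowerSeries ℚ) ^ ((3 * n ^ 2 - n) / 2) -
            (X : PowerSeries ℚ) ^ ((3 * n ^ 2 + n) / 2)) *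
          ∏ k ∈ Finset.Icc 1 N,
            (1 + (X : PowerSeries ℚ) ^ k) * ((1 - (X : PowerSeries ℚ) ^ k)⁻¹) ^ 2) := by
  -- step A : normalize LHS
  have stepA : (∑ n ∈ Finset.Icc 1 N,
        (∏ k ∈ Finset.Icc 1 (n - 1),
            (1 + (X : R) ^ k) * ((1 - (X : R) ^ k)⁻¹) ^ 2) *
          (X : R) ^ n * (1 - (X : R) ^ n)⁻¹)
      = ∑ m ∈ range N, (X : R) ^ (m + 1) * (Pic 0 m * (Den m * Den (m + 1))) := by
    rw [sum_Icc_conv]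
    apply Finset.sum_congr rfl
    intro m _
    have := termL (m + 1) (by omega)
    rwa [show m + 1 - 1 = m from by omega] at this
  rw [stepA]
  -- step B : replace each term using F
  have stepB : MD N (∑ m ∈ range N, (X : R) ^ (m + 1) * (Pic 0 m * (Den m * Den (m + 1))))
      (∑ m ∈ range N, (Pic 0 N * Den N) * ((X : R) ^ (m + 1) * Den m * F N (m + 1))) :=
    MD.sum fun m hm => termC N m (Finset.mem_range.mp hm)
  refine stepB.trans ?_
  -- step C : expand F and swap
  have stepC : (∑ m ∈ range N, (Pic 0 N * Den N) * ((X : R) ^ (m + 1) * Den m * F N (m + 1)))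
      = (Pic 0 N * Den N) * ∑ k ∈ range (N + 2),
          ((-1 : R) ^ k * (Pic 0 k * Den k)) * (∑ m ∈ range N, (X : R) ^ ((k + 1) * (m + 1)) * Den m) := by
    rw [← Finset.mul_sum]
    congr 1
    have hL : ∀ m : ℕ, (X : R) ^ (m + 1) * Den m * F N (m + 1)
        = ∑ k ∈ range (N + 2),
            (-1 : R) ^ k * ((X : R) ^ ((k + 1) * (m + 1)) * (Den m * (Pic 0 k * Den k))) := by
      intro m
      rw [F, Finset.mul_sum]
      apply Finset.sum_congr rfl
      intro k _
      have hx : (X : R) ^ ((k + 1) * (m + 1)) = (X : R) ^ (m + 1) * (X : R) ^ ((m + 1) * k) := by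
        rw [← pow_add]; congr 1; ring
      rw [hx]; ring
    rw [Finset.sum_congr rfl (fun m _ => hL m), Finset.sum_comm]
    apply Finset.sum_congr rfl
    intro k _
    rw [Finset.mul_sum]
    apply Finset.sum_congr rfl
    intro m _
    ring
  rw [stepC]
  -- step D : evaluate inner sums
  have stepD : MD N (∑ k ∈ range (N + 2),
        ((-1 : R) ^ k * (Pic 0 k * Den k)) * (∑ m ∈ range N, (X : R) ^ ((k + 1) * (m + 1)) * Den m))
      (∑ k ∈ range (N + 2), (-1 : R) ^ k * (X : R) ^ (k + 1) * Pic 0 k * Den N) := by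
    apply MD.sum
    intro k _
    rcases Nat.lt_or_ge k N with hk | hk
    · have h1 := MD.mul_left (N := N) ((-1 : R) ^ k * (Pic 0 k * Den k)) (c1_inner N k hk)
      refine h1.trans (MD_of_eq ?_)
      have hDA := Den_Aa (show k ≤ N from by omega)
      linear_combination ((-1 : R) ^ k * (X : R) ^ (k + 1) * Pic 0 k) * hDA
    · -- k ≥ N : everything dies
      have hz1 : MD N (((-1 : R) ^ k * (Pic 0 k * Den k)) * (∑ m ∈ range N, (X : R) ^ ((k + 1) * (m + 1)) * Den m)) 0 := by
        apply MD_zero_of_dvd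
        rw [Finset.mul_sum]
        apply Finset.dvd_sum
        intro m _
        have hx : ((-1 : R) ^ k * (Pic 0 k * Den k)) * ((X : R) ^ ((k + 1) * (m + 1)) * Den m)
            = (X : R) ^ ((k + 1) * (m + 1)) * ((-1 : R) ^ k * (Pic 0 k * Den k) * Den m) := by ring
        rw [hx]
        exact dvd_term (by nlinarith) _
      have hz2 : MD N ((-1 : R) ^ k * (X : R) ^ (k + 1) * Pic 0 k * Den N) 0 := by
        apply MD_zero_of_dvd
        have hx : (-1 : R) ^ k * (X : R) ^ (k + 1) * Pic 0 k * Den N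
            = (X : R) ^ (k + 1) * ((-1 : R) ^ k * Pic 0 k * Den N) := by ring
        rw [hx]
        exact dvd_term (by omega) _
      exact hz1.trans hz2.symm
  have h2 := MD.mul_left (N := N) (Pic 0 N * Den N) stepD
  refine h2.trans ?_
  -- step E : recognize X * W and apply Core 2
  have stepE : (Pic 0 N * Den N) * (∑ k ∈ range (N + 2), (-1 : R) ^ k * (X : R) ^ (k + 1) * Pic 0 k * Den N)
      = (Pic 0 N * (Den N * Den N)) * ((X : R) * W N 1 0) := by
    rw [← XW_eq N, Finset.mul_sum, Finset.mul_sum]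
    apply Finset.sum_congr rfl
    intro k _
    ring
  rw [stepE]
  have h3 := MD.mul_left (N := N) (Pic 0 N * (Den N * Den N)) (c2_final N)
  refine h3.trans (MD_of_eq ?_)
  rw [Finset.mul_sum]
  apply Finset.sum_congr rfl
  intro n _
  rw [PN_eq N]
  ring

end
end St13

/-- `Σ_{n≥1} (∏_{k=1}^{n-1} (1+q^k)/(1-q^k)²) qⁿ/(1-qⁿ)
  = Σ_{n≥1} (q^{(3n²-n)/2} - q^{(3n²+n)/2}) ∏_{k≥1} (1+q^k)/(1-q^k)²`
as formal power series over ℚ, stated coefficient-wise: for every `N ≥ 1` the `N`-th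
coefficients of the partial sums (with the infinite product truncated at `k ≤ N`,
which does not affect coefficients up to degree `N`) agree. -/
theorem stmt13 (N : ℕ) (hN : 1 ≤ N) :
    PowerSeries.coeff (R := ℚ) N (∑ n ∈ Finset.Icc 1 N,
        (∏ k ∈ Finset.Icc 1 (n - 1),
            (1 + (X : PowerSeries ℚ) ^ k) * ((1 - (X : PowerSeries ℚ) ^ k)⁻¹) ^ 2) *
          (X : PowerSeries ℚ) ^ n * (1 - (X : PowerSeries ℚ) ^ n)⁻¹) =
      PowerSeries.coeff (R := ℚ) N (∑ n ∈ Finset.Icc 1 N,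
        ((X : PowerSeries ℚ) ^ ((3 * n ^ 2 - n) / 2) -
            (X : PowerSeries ℚ) ^ ((3 * n ^ 2 + n) / 2)) *
          ∏ k ∈ Finset.Icc 1 N,
            (1 + (X : PowerSeries ℚ) ^ k) * ((1 - (X : PowerSeries ℚ) ^ k)⁻¹) ^ 2) :=
  St13.coeff_eq_of_MD (St13.main N hN)
end

section
/- Let p = (p_1 ≥ ... ≥ p_k) be a partition of n, let P be a pyramid in Pyr(p), let e(P) ∈ gl_n be the nilpotent endomorphism acting along the rows of P (sending each basis vector labeled by a box to the vector labeled by its right neighbor, or to 0), and let h(P) be the diagonal matrix whose entries are the first coordinates of the boxes' centers. Then [h(P), e(P)] = 2 e(P), and every element of the centralizer of e(P) in gl_n has nonnegative degree with respect to the grading by ad h(P); i.e., (h(P), e(P)) is a good pair. -/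
/-- for a pyramid `P` with rows `0, ..., k` of lengths `p` and left
endpoints `f` (nested, bottom row symmetric), let `B` be the set of boxes,
`coord b` the first coordinate of a box, `M = e(P)` the nilpotent matrix acting along
the rows and `H = h(P)` the diagonal matrix of the coordinates.  Then
`[H, M] = 2 M`, and every matrix commuting with `M` has nonnegative degree with
respect to `ad H`, i.e. its entry at `(b, c)` vanishes whenever `coord b < coord c`:
`(h(P), e(P))` is a good pair. -/
theorem stmt16 {F : Type*} [Field F] [CharZero F]
    (k : ℕ) (p : Fin (k + 1) → ℕ)
    (hpos : ∀ i, 0 < p i) (hanti : Antitone p)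
    (f : Fin (k + 1) → ℤ) (hbase : f 0 = 1 - (p 0 : ℤ))
    (hnestL : ∀ i : Fin k, f i.castSucc ≤ f i.succ)
    (hnestR : ∀ i : Fin k, f i.succ + 2 * (p i.succ : ℤ) ≤ f i.castSucc + 2 * (p i.castSucc : ℤ)) :
    let B := Σ i : Fin (k + 1), Fin (p i)
    let coord : B → ℤ := fun b => f b.1 + 2 * (b.2 : ℕ)
    let M : Matrix B B F :=
      fun b c => if b.1 = c.1 ∧ (b.2 : ℕ) = (c.2 : ℕ) + 1 then 1 else 0
    let H : Matrix B B F := Matrix.diagonal fun b => ((coord b : ℤ) : F)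
    H * M - M * H = 2 • M ∧
      ∀ A : Matrix B B F, A * M = M * A →
        ∀ b c : B, coord b < coord c → A b c = 0 := by
  intro B coord M H
  -- monotonicity of left and right endpoints
  have key : ∀ d : ℕ, ∀ i j : Fin (k+1), (j:ℕ) = (i:ℕ) + d →
      f i ≤ f j ∧ f j + 2*(p j : ℤ) ≤ f i + 2*(p i : ℤ) := by
    intro d
    induction d with
    | zero =>
      intro i j hij
      have : i = j := Fin.ext (by omega)
      subst this
      exact ⟨le_refl _, le_refl _⟩
    | succ d ih =>
      intro i j hij
      have hj' : (i:ℕ) + d < k + 1 := by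
        have := j.2; omega
      set j' : Fin (k+1) := ⟨(i:ℕ)+d, hj'⟩ with hj'def
      have h1 := ih i j' rfl
      have hlt : (j':ℕ) < k := by
        have := j.2; simp [hj'def]; omega
      have hcast : (⟨(j':ℕ), hlt⟩ : Fin k).castSucc = j' := by
        simp [Fin.ext_iff]
      have hsucc : (⟨(j':ℕ), hlt⟩ : Fin k).succ = j := by
        simp [Fin.ext_iff, hj'def]; omega
      have h2 := hnestL ⟨(j':ℕ), hlt⟩
      have h3 := hnestR ⟨(j':ℕ), hlt⟩
      rw [hcast, hsucc] at h2 h3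
      exact ⟨le_trans h1.1 h2, le_trans h3 h1.2⟩
  have hmono : ∀ i j : Fin (k+1), i ≤ j →
      f i ≤ f j ∧ f j + 2*(p j : ℤ) ≤ f i + 2*(p i : ℤ) := by
    intro i j hij
    exact key ((j:ℕ) - (i:ℕ)) i j (by omega)
  -- entry computations
  have hAM : ∀ (A : Matrix B B F) (b c : B),
      (A * M) b c = if h : (c.2:ℕ)+1 < p c.1 then A b ⟨c.1, ⟨(c.2:ℕ)+1, h⟩⟩ else 0 := by
    intro A b c
    rw [Matrix.mul_apply]
    split_ifs with h
    · rw [Finset.sum_eq_single (⟨c.1, ⟨(c.2:ℕ)+1, h⟩⟩ : B)]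
      · simp [M]
      · intro d _ hd
        have : M d c = 0 := by
          simp only [M]
          rw [if_neg]
          rintro ⟨h1, h2⟩
          apply hd
          obtain ⟨d1, d2⟩ := d
          cases h1
          simp_all [Fin.ext_iff]
        rw [this, mul_zero]
      · intro h'; exact absurd (Finset.mem_univ _) h'
    · apply Finset.sum_eq_zero
      intro d _
      have : M d c = 0 := by
        simp only [M]
        rw [if_neg]
        rintro ⟨h1, h2⟩
        apply h
        have := d.2.2
        rw [h2] at this
        rw [h1] at this
        exact this
      rw [this, mul_zero]
  have hMA : ∀ (A : Matrix B B F) (b c : B),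
      (M * A) b c = if h : 0 < (b.2:ℕ) then
        A ⟨b.1, ⟨(b.2:ℕ)-1, Nat.lt_of_le_of_lt (Nat.sub_le _ _) b.2.2⟩⟩ c else 0 := by
    intro A b c
    rw [Matrix.mul_apply]
    split_ifs with h
    · rw [Finset.sum_eq_single (⟨b.1, ⟨(b.2:ℕ)-1, Nat.lt_of_le_of_lt (Nat.sub_le _ _) b.2.2⟩⟩ : B)]
      · have hv : (b.2:ℕ) - 1 + 1 = (b.2:ℕ) := Nat.succ_pred_eq_of_pos h
        have : M b ⟨b.1, ⟨(b.2:ℕ)-1, Nat.lt_of_le_of_lt (Nat.sub_le _ _) b.2.2⟩⟩ = 1 := by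
          simp [M, hv]
        rw [this, one_mul]
      · intro d _ hd
        have : M b d = 0 := by
          simp only [M]
          rw [if_neg]
          rintro ⟨h1, h2⟩
          apply hd
          obtain ⟨d1, d2⟩ := d
          cases h1.symm
          simp_all [Fin.ext_iff] <;> omega
        rw [this, zero_mul]
      · intro h'; exact absurd (Finset.mem_univ _) h'
    · apply Finset.sum_eq_zero
      intro d _
      have : M b d = 0 := by
        simp only [M]
        rw [if_neg]
        rintro ⟨h1, h2⟩
        omega
      rw [this, zero_mul]
  constructor
  · -- [H, M] = 2 M
    ext b c
    rw [Matrix.sub_apply, Matrix.smul_apply]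
    simp only [H, Matrix.diagonal_mul, Matrix.mul_diagonal]
    simp only [M]
    split_ifs with h
    · obtain ⟨h1, h2⟩ := h
      have hc : coord b - coord c = 2 := by
        simp only [coord]
        obtain ⟨b1, b2⟩ := b
        obtain ⟨c1, c2⟩ := c
        have h1' : b1 = c1 := h1
        subst h1'
        dsimp only at h2 ⊢
        omega
      rw [mul_one, one_mul]
      rw [show (2:ℕ) • (1:F) = ((2:ℤ):F) from by norm_num]
      rw [← Int.cast_sub, hc]
    · simp
  · -- goodness
    intro A hA b c hbc
    -- constraint L : column index cannot increase
    have hL : ∀ j : ℕ, ∀ c' : B, (c'.2:ℕ) ≤ j → ∀ b' : B, (b'.2:ℕ) < (c'.2:ℕ) → A b' c' = 0 := by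
      intro j
      induction j with
      | zero => intro c' hc' b' hb'; omega
      | succ j ih =>
        intro c' hc' b' hb'
        by_cases hcj : (c'.2:ℕ) ≤ j
        · exact ih c' hcj b' hb'
        · have hc1 : (c'.2:ℕ) = j + 1 := by omega
          have hsp : (c'.2:ℕ) - 1 + 1 < p c'.1 := by
            have := c'.2.2; omega
          have e1 := hAM A b' ⟨c'.1, ⟨(c'.2:ℕ)-1, Nat.lt_of_le_of_lt (Nat.sub_le _ _) c'.2.2⟩⟩
          have e2 := hMA A b' ⟨c'.1, ⟨(c'.2:ℕ)-1, Nat.lt_of_le_of_lt (Nat.sub_le _ _) c'.2.2⟩⟩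
          rw [hA] at e1
          rw [e2] at e1
          dsimp only at e1
          rw [dif_pos hsp] at e1
          have hcc : (⟨c'.1, ⟨(c'.2:ℕ)-1+1, hsp⟩⟩ : B) = c' := by
            have hv : ((⟨(c'.2:ℕ)-1+1, hsp⟩ : Fin (p c'.1)) : ℕ) = (c'.2 : ℕ) := by
              dsimp only; omega
            exact congrArg (Sigma.mk c'.1) (Fin.val_injective hv)
          rw [hcc] at e1
          by_cases hb0 : 0 < (b'.2:ℕ)
          · rw [dif_pos hb0] at e1
            rw [← e1]
            exact ih ⟨c'.1, ⟨(c'.2:ℕ)-1, Nat.lt_of_le_of_lt (Nat.sub_le _ _) c'.2.2⟩⟩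
              (show (c'.2:ℕ)-1 ≤ j by omega)
              ⟨b'.1, ⟨(b'.2:ℕ)-1, Nat.lt_of_le_of_lt (Nat.sub_le _ _) b'.2.2⟩⟩
              (show (b'.2:ℕ)-1 < (c'.2:ℕ)-1 by omega)
          · rw [dif_neg hb0] at e1
            exact e1.symm
    -- constraint R : distance to the right end cannot increase
    have hR : ∀ m : ℕ, ∀ c' : B, p c'.1 - 1 - (c'.2:ℕ) ≤ m → ∀ b' : B,
        (b'.2:ℕ) + (p c'.1 - (c'.2:ℕ)) < p b'.1 → A b' c' = 0 := by
      intro m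
      induction m with
      | zero =>
        intro c' hc' b' hb'
        have hc2 := c'.2.2
        have hbp : (b'.2:ℕ)+1 < p b'.1 := by omega
        have e1 := hAM A ⟨b'.1, ⟨(b'.2:ℕ)+1, hbp⟩⟩ c'
        have e2 := hMA A ⟨b'.1, ⟨(b'.2:ℕ)+1, hbp⟩⟩ c'
        rw [hA] at e1
        rw [e2] at e1
        dsimp only at e1
        rw [dif_neg (show ¬((c'.2:ℕ)+1 < p c'.1) by omega)] at e1
        rw [dif_pos (show 0 < (b'.2:ℕ)+1 by omega)] at e1
        exact e1
      | succ m ih =>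
        intro c' hc' b' hb'
        by_cases hcm : p c'.1 - 1 - (c'.2:ℕ) ≤ m
        · exact ih c' hcm b' hb'
        · have hc2 := c'.2.2
          have hcp : (c'.2:ℕ)+1 < p c'.1 := by omega
          have hbp : (b'.2:ℕ)+1 < p b'.1 := by omega
          have e1 := hAM A ⟨b'.1, ⟨(b'.2:ℕ)+1, hbp⟩⟩ c'
          have e2 := hMA A ⟨b'.1, ⟨(b'.2:ℕ)+1, hbp⟩⟩ c'
          rw [hA] at e1
          rw [e2] at e1
          dsimp only at e1
          rw [dif_pos hcp] at e1
          rw [dif_pos (show 0 < (b'.2:ℕ)+1 by omega)] at e1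
          refine Eq.trans e1 ?_
          exact ih ⟨c'.1, ⟨(c'.2:ℕ)+1, hcp⟩⟩
            (show p c'.1 - 1 - ((c'.2:ℕ)+1) ≤ m by omega)
            ⟨b'.1, ⟨(b'.2:ℕ)+1, hbp⟩⟩
            (show (b'.2:ℕ)+1 + (p c'.1 - ((c'.2:ℕ)+1)) < p b'.1 by omega)
    -- conclude
    simp only [coord] at hbc
    by_cases hcol : (b.2:ℕ) < (c.2:ℕ)
    · exact hL (c.2:ℕ) c le_rfl b hcol
    · have hf : f b.1 < f c.1 := by omega
      have hb1c1 : b.1 ≤ c.1 := by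
        by_contra hcon
        have := (hmono c.1 b.1 (le_of_not_ge hcon)).1
        omega
      have hrend := (hmono b.1 c.1 hb1c1).2
      apply hR (p c.1) c (by omega) b
      have hc2 := c.2.2
      have hb2 := b.2.2
      omega
end

section
/- For every partition p of n, there exists a semisimple element h^e ∈ sl_n such that the pair (h^e, e(p)) is good and the resulting Z-grading of sl_n is even (all odd graded components vanish). -/
/-- `(D, E)` is a good pair in `gl(B)`: see statement 17. -/
def IsGoodPair {F : Type*} [Field F] {B : Type*} [Fintype B] [DecidableEq B]
    (D : B → F) (E : Matrix B B F) : Prop :=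
  (∀ b c : B, ∃ z : ℤ, D b - D c = (z : F)) ∧
  Matrix.diagonal D * E - E * Matrix.diagonal D = 2 • E ∧
  (∀ A : Matrix B B F, A * E = E * A → ∀ b c : B, A b c ≠ 0 → ∃ n : ℕ, D b - D c = (n : F))

section Aux

variable {F : Type*} [Field F] {d : ℕ} (p m : Fin (d + 1) → ℕ)

/-- The index set. -/
abbrev BB : Type := Σ i : Fin (d + 1), Fin (m i) × Fin (p i)

/-- The nilpotent `e(p)`. -/
def EE : Matrix (BB p m) (BB p m) F := fun b c =>
  if b.1 = c.1 ∧ (b.2.1 : ℕ) = (c.2.1 : ℕ) ∧ (b.2.2 : ℕ) = (c.2.2 : ℕ) + 1 then 1 else 0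

variable {p m}

lemma mulE (A : Matrix (BB p m) (BB p m) F) (b : BB p m)
    (i' : Fin (d + 1)) (j' : Fin (m i')) (l : ℕ) (hl : l < p i') :
    ((A * EE p m : Matrix (BB p m) (BB p m) F)) b ⟨i', j', ⟨l, hl⟩⟩ =
      if h : l + 1 < p i' then A b ⟨i', j', ⟨l + 1, h⟩⟩ else 0 := by
  rw [Matrix.mul_apply]
  split
  · next h =>
    rw [Finset.sum_eq_single_of_mem (⟨i', j', ⟨l + 1, h⟩⟩ : BB p m) (Finset.mem_univ _)]
    · rw [EE, if_pos ⟨rfl, rfl, rfl⟩, mul_one]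
    · rintro ⟨ix, jx, kx⟩ _ hx
      rw [EE]
      rw [if_neg, mul_zero]
      rintro ⟨h1, h2, h3⟩
      dsimp only at h1 h2 h3
      subst h1
      exact hx (congrArg (Sigma.mk _) (Prod.ext (Fin.ext h2) (Fin.ext h3)))
  · next h =>
    apply Finset.sum_eq_zero
    rintro ⟨ix, jx, kx⟩ _
    rw [EE, if_neg, mul_zero]
    rintro ⟨h1, h2, h3⟩
    dsimp only at h1 h3
    subst h1
    exact h (h3 ▸ kx.isLt)

lemma Emul (A : Matrix (BB p m) (BB p m) F)
    (i : Fin (d + 1)) (j : Fin (m i)) (k : ℕ) (hk : k < p i) (c : BB p m) :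
    ((EE p m * A : Matrix (BB p m) (BB p m) F)) ⟨i, j, ⟨k, hk⟩⟩ c =
      if 1 ≤ k then A ⟨i, j, ⟨k - 1, lt_of_le_of_lt (Nat.sub_le _ _) hk⟩⟩ c
      else 0 := by
  rw [Matrix.mul_apply]
  split
  · next h =>
    rw [Finset.sum_eq_single_of_mem
      (⟨i, j, ⟨k - 1, lt_of_le_of_lt (Nat.sub_le _ _) hk⟩⟩ : BB p m)
      (Finset.mem_univ _)]
    · rw [EE, if_pos, one_mul]
      exact ⟨rfl, rfl, by dsimp only; omega⟩
    · rintro ⟨ix, jx, kx⟩ _ hx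
      rw [EE]
      rw [if_neg, zero_mul]
      rintro ⟨h1, h2, h3⟩
      dsimp only at h1 h2 h3
      subst h1
      refine hx (congrArg (Sigma.mk _) (Prod.ext (Fin.ext h2.symm) (Fin.ext ?_)))
      dsimp only
      omega
  · next h =>
    apply Finset.sum_eq_zero
    rintro ⟨ix, jx, kx⟩ _
    rw [EE, if_neg, zero_mul]
    rintro ⟨h1, h2, h3⟩
    dsimp only at h3
    omega

/-- Structure of matrices commuting with `EE`: a nonzero entry
`A ⟨i,j,k⟩ ⟨i',j',l⟩` forces `l ≤ k` and `l + p i ≤ k + p i'`. -/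
lemma key (A : Matrix (BB p m) (BB p m) F) (hA : A * EE p m = EE p m * A)
    (i i' : Fin (d + 1)) (j : Fin (m i)) (j' : Fin (m i'))
    (k l : ℕ) (hk : k < p i) (hl : l < p i')
    (hne : A ⟨i, j, ⟨k, hk⟩⟩ ⟨i', j', ⟨l, hl⟩⟩ ≠ 0) :
    l ≤ k ∧ l + p i ≤ k + p i' := by
  set a : ℕ → ℕ → F := fun k l =>
    if hk : k < p i then if hl : l < p i' then A ⟨i, j, ⟨k, hk⟩⟩ ⟨i', j', ⟨l, hl⟩⟩ else 0 else 0
    with ha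
  have hbounds : ∀ k l, a k l ≠ 0 → k < p i ∧ l < p i' := by
    intro k l h
    rw [ha] at h
    dsimp only at h
    split at h
    · split at h
      · exact ⟨‹_›, ‹_›⟩
      · exact absurd rfl h
    · exact absurd rfl h
  have rel : ∀ k l, k < p i → l < p i' →
      a k (l + 1) = if 1 ≤ k then a (k - 1) l else 0 := by
    intro k l hk hl
    have hcomm : ((A * EE p m : Matrix (BB p m) (BB p m) F)) ⟨i, j, ⟨k, hk⟩⟩ ⟨i', j', ⟨l, hl⟩⟩
        = ((EE p m * A : Matrix (BB p m) (BB p m) F)) ⟨i, j, ⟨k, hk⟩⟩ ⟨i', j', ⟨l, hl⟩⟩ := by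
      rw [hA]
    rw [mulE A ⟨i, j, ⟨k, hk⟩⟩ i' j' l hl, Emul A i j k hk] at hcomm
    rw [ha]
    dsimp only
    rw [dif_pos hk]
    rw [hcomm]
    by_cases h1 : 1 ≤ k
    · rw [if_pos h1, if_pos h1,
        dif_pos (show k - 1 < p i from lt_of_le_of_lt (Nat.sub_le _ _) hk), dif_pos hl]
    · rw [if_neg h1, if_neg h1]
  have C1 : ∀ l k, a k l ≠ 0 → l ≤ k := by
    intro l
    induction l with
    | zero => intro k _; exact Nat.zero_le _
    | succ l ih =>
      intro k h
      obtain ⟨hk', hl'⟩ := hbounds _ _ h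
      rw [rel k l hk' (by omega)] at h
      split at h
      · have := ih _ h
        omega
      · exact absurd rfl h
  have C2 : ∀ t k l, a k l ≠ 0 → k + t < p i → a (k + t) (l + t) ≠ 0 := by
    intro t
    induction t with
    | zero => intro k l h _; simpa using h
    | succ t ih =>
      intro k l h hkt
      have h' : a (k + t) (l + t) ≠ 0 := ih k l h (by omega)
      obtain ⟨hk', hl'⟩ := hbounds _ _ h'
      have hrel := rel (k + t + 1) (l + t) (by omega) hl'
      rw [if_pos (by omega)] at hrel
      simp only [Nat.add_sub_cancel] at hrel
      show a (k + t + 1) (l + t + 1) ≠ 0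
      rw [hrel]
      exact h'
  have h0 : a k l ≠ 0 := by
    rw [ha]; dsimp only; rw [dif_pos hk, dif_pos hl]; exact hne
  refine ⟨C1 _ _ h0, ?_⟩
  have h2 := C2 (p i - 1 - k) k l h0 (by omega)
  have := (hbounds _ _ h2).2
  omega

/-- `StrictAnti` on `ℕ`-valued functions gives gaps at least the index difference. -/
lemma gap (hstrict : StrictAnti p) :
    ∀ n (i i' : Fin (d + 1)), (i' : ℕ) = (i : ℕ) + n → p i' + n ≤ p i := by
  intro n
  induction n with
  | zero =>
    intro i i' h
    have : i' = i := Fin.ext (by omega)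
    subst this; omega
  | succ n ih =>
    intro i i' h
    have hi'' : (i : ℕ) + n < d + 1 := by have := i'.isLt; omega
    set i'' : Fin (d + 1) := ⟨(i : ℕ) + n, hi''⟩ with hi''def
    have h1 : p i'' + n ≤ p i := ih i i'' rfl
    have h2 : p i' < p i'' := hstrict (show i'' < i' by
      rw [Fin.lt_def]
      show (i : ℕ) + n < (i' : ℕ)
      omega)
    omega

end Aux

/-- for every partition (with distinct parts `p 0 > ... > p d` of
multiplicities `m i > 0`) there exists a traceless diagonal element `D` (i.e. in
`sl_n`) such that `(D, e(p))` is a good pair and the associated ℤ-grading is even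
(all eigenvalue differences of `ad D` are even integers). -/
theorem stmt18 {F : Type*} [Field F] [CharZero F]
    (d : ℕ) (p m : Fin (d + 1) → ℕ)
    (hstrict : StrictAnti p) (hppos : ∀ i, 0 < p i) (hmpos : ∀ i, 0 < m i) :
    let B := Σ i : Fin (d + 1), Fin (m i) × Fin (p i)
    let E : Matrix B B F := fun b c =>
      if b.1 = c.1 ∧ (b.2.1 : ℕ) = (c.2.1 : ℕ) ∧ (b.2.2 : ℕ) = (c.2.2 : ℕ) + 1 then 1 else 0
    ∃ D : B → F, IsGoodPair D E ∧
      (∀ b c : B, ∃ z : ℤ, D b - D c = ((2 * z : ℤ) : F)) ∧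
      (∑ b : B, D b = 0) := by
  intro B E
  have hne : Nonempty B := ⟨⟨0, ⟨0, hmpos 0⟩, ⟨0, hppos 0⟩⟩⟩
  set f : B → F := fun b => ((2 * (b.1 : ℕ) + 2 * (b.2.2 : ℕ) : ℕ) : F) with hf
  set S : F := ∑ b : B, f b with hS
  set N : F := (Fintype.card B : F) with hN
  have hN0 : N ≠ 0 := Nat.cast_ne_zero.mpr Fintype.card_ne_zero
  refine ⟨fun b => f b - S / N, ?_, ?_, ?_⟩
  · refine ⟨?_, ?_, ?_⟩
    · -- integer differences
      rintro ⟨i, j, k⟩ ⟨i', j', l⟩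
      refine ⟨(2 * (i : ℕ) + 2 * (k : ℕ) : ℤ) - (2 * (i' : ℕ) + 2 * (l : ℕ) : ℤ), ?_⟩
      rw [hf]
      push_cast
      ring
    · -- commutation relation
      ext b c
      have hd : ((Matrix.diagonal (fun b => f b - S / N) * E - E *
            Matrix.diagonal (fun b => f b - S / N) : Matrix B B F)) b c
          = (f b - f c) * E b c := by
        rw [Matrix.sub_apply, Matrix.diagonal_mul, Matrix.mul_diagonal]
        ring
      rw [hd]
      show _ = 2 • E b c
      obtain ⟨i, j, k⟩ := b
      obtain ⟨i', j', l⟩ := c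
      show (f _ - f _) * (if _ then _ else _) = 2 • (if _ then _ else _)
      split
      · next h =>
        obtain ⟨h1, h2, h3⟩ := h
        dsimp only at h1 h2 h3
        subst h1
        rw [hf]
        dsimp only
        rw [h3, nsmul_eq_mul]
        push_cast
        ring
      · next h => simp
    · -- goodness
      intro A hA b c hAne
      obtain ⟨i, j, k⟩ := b
      obtain ⟨i', j', l⟩ := c
      have hkey := key (p := p) (m := m) A hA i i' j j' k l k.isLt l.isLt
        (by convert hAne <;> simp)
      have h1 : (l : ℕ) ≤ k := hkey.1
      have h2 : (l : ℕ) + p i ≤ (k : ℕ) + p i' := hkey.2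
      have hik : (i' : ℕ) + l ≤ (i : ℕ) + k := by
        rcases le_or_gt (i' : ℕ) (i : ℕ) with h | h
        · omega
        · have := gap hstrict ((i' : ℕ) - i) i i' (by omega)
          omega
      refine ⟨2 * ((i : ℕ) + k) - 2 * ((i' : ℕ) + l), ?_⟩
      have hle : 2 * ((i' : ℕ) + l) ≤ 2 * ((i : ℕ) + k) := by omega
      rw [hf]
      dsimp only
      rw [Nat.cast_sub hle]
      push_cast
      ring
  · -- even differences
    rintro ⟨i, j, k⟩ ⟨i', j', l⟩
    refine ⟨((i : ℕ) + k : ℤ) - ((i' : ℕ) + l : ℤ), ?_⟩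
    rw [hf]
    push_cast
    ring
  · -- traceless
    rw [Finset.sum_sub_distrib, Finset.sum_const, Finset.card_univ, nsmul_eq_mul, ← hS, ← hN,
      mul_div_cancel₀ _ hN0, sub_self]
end
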